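/- arXiv:2303.03871 — 4 statements merged into one kernel-verified Lean document; each statement's English description precedes it below -/
import Mathlib

section
/- Let (n_k)_{k≥1} satisfy n_{k+1} > n_k² for all k ≥ 1, and let K ⊆ ℕ be infinite. Then every linear subspace of ℓ∞ contained in L(A) ∪ {0}, where A = {m ≥ 2 : m ∉ [n_k, n_{k+1}) ∀ k ∈ K}, has a countable Hamel basis; in particular L(A) is not densely lineable. -/
open Filter Topology Set ENNReal

noncomputable section
set_option maxHeartbeats 1000000
set_option synthInstance.maxHeartbeats 400000

/-- The set of accumulation points of a real sequence: limits of convergent subsequences. -/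
def accPts (x : ℕ → ℝ) : Set ℝ :=
  {a | ∃ φ : ℕ → ℕ, StrictMono φ ∧ Tendsto (fun k => x (φ k)) atTop (𝓝 a)}


/-- The space ℓ∞ of bounded real sequences. -/
abbrev Linf : Type := ↥(lp (fun _ : ℕ => ℝ) ∞)

/-- Accumulation points of an element of ℓ∞. -/
def accPtsL (z : Linf) : Set ℝ := accPts (fun n => z n)

/-- Joint accumulation points of a finite family of elements of ℓ∞. -/
def jointAcc {d : ℕ} (z : Fin d → Linf) : Set (Fin d → ℝ) :=
  {p | ∃ φ : ℕ → ℕ, StrictMono φ ∧ ∀ i, Tendsto (fun k => (z i : ℕ → ℝ) (φ k)) atTop (𝓝 (p i))}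

lemma abs_coe_le (z : Linf) (m : ℕ) : |(z : ℕ → ℝ) m| ≤ ‖z‖ := by
  have := lp.norm_apply_le_norm (E := fun _ : ℕ => ℝ) ENNReal.top_ne_zero z m
  simpa [Real.norm_eq_abs] using this

/-- Bolzano–Weierstrass extraction for a finite family along a subsequence. -/
lemma exists_joint_subseq {d : ℕ} (z : Fin d → Linf) (φ : ℕ → ℕ) (hφ : StrictMono φ) :
    ∃ p ∈ jointAcc z, ∃ ψ : ℕ → ℕ, StrictMono ψ ∧
      ∀ i, Tendsto (fun k => (z i : ℕ → ℝ) (φ (ψ k))) atTop (𝓝 (p i)) := by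
  set C : Set (Fin d → ℝ) := Set.univ.pi fun i => Icc (-‖z i‖) ‖z i‖ with hCdef
  have hC : IsCompact C := isCompact_univ_pi fun i => isCompact_Icc
  have hx : ∀ k, (fun i => (z i : ℕ → ℝ) (φ k)) ∈ C := by
    intro k
    rw [hCdef, Set.mem_univ_pi]
    intro i
    have h := abs_coe_le (z i) (φ k)
    rw [abs_le] at h
    exact ⟨h.1, h.2⟩
  obtain ⟨p, -, ψ, hψ, hto⟩ := hC.tendsto_subseq hx
  have hcoord : ∀ i, Tendsto (fun k => (z i : ℕ → ℝ) (φ (ψ k))) atTop (𝓝 (p i)) := by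
    intro i
    have := tendsto_pi_nhds.mp hto i
    simpa [Function.comp] using this
  exact ⟨p, ⟨φ ∘ ψ, hφ.comp hψ, hcoord⟩, ψ, hψ, hcoord⟩

lemma jointAcc_nonempty {d : ℕ} (z : Fin d → Linf) : (jointAcc z).Nonempty := by
  obtain ⟨p, hp, -⟩ := exists_joint_subseq z id strictMono_id
  exact ⟨p, hp⟩

lemma jointAcc_subset_pi {d : ℕ} (z : Fin d → Linf) :
    jointAcc z ⊆ Set.univ.pi fun i => accPtsL (z i) := by
  rintro p ⟨φ, hφ, hp⟩ i -
  exact ⟨φ, hφ, hp i⟩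

lemma jointAcc_finite {d : ℕ} (z : Fin d → Linf) (h : ∀ i, (accPtsL (z i)).Finite) :
    (jointAcc z).Finite :=
  (Set.Finite.pi h).subset (jointAcc_subset_pi z)

lemma coe_sum_smul {d : ℕ} (lam : Fin d → ℝ) (z : Fin d → Linf) (m : ℕ) :
    ((∑ i, lam i • z i : Linf) : ℕ → ℝ) m = ∑ i, lam i * (z i : ℕ → ℝ) m := by
  rw [lp.coeFn_sum]
  simp [lp.coeFn_smul]

/-- The accumulation set of a linear combination is the image of the joint accumulation set. -/
lemma accPtsL_sum_smul {d : ℕ} (lam : Fin d → ℝ) (z : Fin d → Linf) :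
    accPtsL (∑ i, lam i • z i) = (fun p : Fin d → ℝ => ∑ i, lam i * p i) '' jointAcc z := by
  ext a
  constructor
  · rintro ⟨φ, hφ, ha⟩
    obtain ⟨p, hp, ψ, hψ, hto⟩ := exists_joint_subseq z φ hφ
    refine ⟨p, hp, ?_⟩
    have h1 : Tendsto (fun k => ((∑ i, lam i • z i : Linf) : ℕ → ℝ) (φ (ψ k))) atTop (𝓝 a) :=
      ha.comp hψ.tendsto_atTop
    have h2 : Tendsto (fun k => ((∑ i, lam i • z i : Linf) : ℕ → ℝ) (φ (ψ k))) atTop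
        (𝓝 (∑ i, lam i * p i)) := by
      have : ∀ k, ((∑ i, lam i • z i : Linf) : ℕ → ℝ) (φ (ψ k))
          = ∑ i, lam i * (z i : ℕ → ℝ) (φ (ψ k)) := fun k => coe_sum_smul lam z _
      simp only [this]
      exact tendsto_finset_sum _ fun i _ => (hto i).const_mul (lam i)
    simpa using tendsto_nhds_unique h2 h1
  · rintro ⟨p, ⟨φ, hφ, hp⟩, rfl⟩
    refine ⟨φ, hφ, ?_⟩
    have : ∀ k, ((∑ i, lam i • z i : Linf) : ℕ → ℝ) (φ k)
        = ∑ i, lam i * (z i : ℕ → ℝ) (φ k) := fun k => coe_sum_smul lam z _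
    simp only [this]
    exact tendsto_finset_sum _ fun i _ => (hp i).const_mul (lam i)

lemma accPts_const_mul {c : ℝ} (hc : c ≠ 0) (x : ℕ → ℝ) :
    accPts (fun m => c * x m) = (fun a => c * a) '' accPts x := by
  ext a
  constructor
  · rintro ⟨φ, hφ, ha⟩
    refine ⟨c⁻¹ * a, ⟨φ, hφ, ?_⟩, by field_simp⟩
    have := ha.const_mul c⁻¹
    simpa [← mul_assoc, inv_mul_cancel₀ hc] using this
  · rintro ⟨b, ⟨φ, hφ, hb⟩, rfl⟩
    exact ⟨φ, hφ, hb.const_mul c⟩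

lemma accPtsL_nonempty (v : Linf) : (accPtsL v).Nonempty := by
  have hx : ∀ k, (v : ℕ → ℝ) k ∈ Icc (-‖v‖) ‖v‖ := by
    intro k
    have h := abs_coe_le v k
    rw [abs_le] at h
    exact ⟨h.1, h.2⟩
  obtain ⟨a, -, φ, hφ, ha⟩ := isCompact_Icc.tendsto_subseq hx
  exact ⟨a, φ, hφ, ha⟩

lemma ncard_accPtsL_smul_le {c : ℝ} (v : Linf) (hv : (accPtsL v).Finite) :
    (accPtsL (c • v)).ncard ≤ (accPtsL v).ncard := by
  rcases eq_or_ne c 0 with rfl | hc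
  · have h0 : accPtsL ((0 : ℝ) • v) = {0} := by
      have hcoe : ∀ m, (((0 : ℝ) • v : Linf) : ℕ → ℝ) m = 0 := by
        intro m; rw [lp.coeFn_smul]; simp
      unfold accPtsL
      simp only [hcoe]
      ext a
      constructor
      · rintro ⟨φ, hφ, ha⟩
        have := tendsto_nhds_unique ha tendsto_const_nhds
        simp [this]
      · rintro rfl
        exact ⟨id, strictMono_id, tendsto_const_nhds⟩
    rw [h0]
    rw [Set.ncard_singleton]
    exact (Set.ncard_pos hv).2 (accPtsL_nonempty v)
  · have hcoe : accPtsL (c • v) = accPts fun m => c * (v : ℕ → ℝ) m := by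
      have h : ∀ m, ((c • v : Linf) : ℕ → ℝ) m = c * (v : ℕ → ℝ) m := by
        intro m; rw [lp.coeFn_smul]; simp
      unfold accPtsL
      simp only [h]
    rw [hcoe, accPts_const_mul hc]
    exact Set.ncard_image_le hv

/-- Splitting off the last coordinate bounds the joint accumulation set. -/
lemma jointAcc_ncard_succ {d : ℕ} (z : Fin (d + 1) → Linf)
    (h1 : (jointAcc (z ∘ Fin.castSucc)).Finite) (h2 : (accPtsL (z (Fin.last d))).Finite) :
    (jointAcc z).ncard ≤ (jointAcc (z ∘ Fin.castSucc)).ncard * (accPtsL (z (Fin.last d))).ncard := by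
  classical
  set f : (Fin (d + 1) → ℝ) → (Fin d → ℝ) × ℝ := fun p => (p ∘ Fin.castSucc, p (Fin.last d))
  have hmap : ∀ p ∈ jointAcc z, f p ∈ (jointAcc (z ∘ Fin.castSucc)) ×ˢ accPtsL (z (Fin.last d)) := by
    rintro p ⟨φ, hφ, hp⟩
    exact ⟨⟨φ, hφ, fun i => hp (Fin.castSucc i)⟩, ⟨φ, hφ, hp (Fin.last d)⟩⟩
  have hinj : Set.InjOn f (jointAcc z) := by
    intro p _ q _ h
    funext i
    refine Fin.lastCases ?_ ?_ i
    · exact congrArg Prod.snd h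
    · intro j
      exact congrFun (congrArg Prod.fst h) j
  have hcard := Set.ncard_le_ncard_of_injOn f hmap hinj (h1.prod h2)
  have : ((jointAcc (z ∘ Fin.castSucc)) ×ˢ accPtsL (z (Fin.last d))).ncard
      = (jointAcc (z ∘ Fin.castSucc)).ncard * (accPtsL (z (Fin.last d))).ncard := by
    rw [← Nat.card_coe_set_eq, ← Nat.card_coe_set_eq, ← Nat.card_coe_set_eq,
      Nat.card_congr (Equiv.Set.prod _ _), Nat.card_prod]
  omega

lemma finite_root_set {a b : ℝ} (h : a ≠ 0 ∨ b ≠ 0) : {t : ℝ | a + t * b = 0}.Finite := by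
  rcases eq_or_ne b 0 with rfl | hb
  · have : {t : ℝ | a + t * 0 = 0} = ∅ := by
      ext t
      simp only [Set.mem_setOf_eq, Set.mem_empty_iff_false, iff_false]
      rcases h with h | h
      · simpa using h
      · exact absurd rfl h
    rw [this]; exact Set.finite_empty
  · apply Set.Finite.subset (Set.finite_singleton (-a / b))
    intro t ht
    simp only [Set.mem_setOf_eq] at ht
    have : t * b = -a := by linarith
    simp only [Set.mem_singleton_iff]
    field_simp
    linarith

/-- A linear functional not vanishing on a given finite set of nonzero vectors. -/
lemma exists_forall_dot_ne_zero {m : ℕ} (S : Finset (Fin m → ℝ)) (hS : ∀ v ∈ S, v ≠ 0) :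
    ∃ lam : Fin m → ℝ, ∀ v ∈ S, (∑ i, lam i * v i) ≠ 0 := by
  classical
  induction S using Finset.induction_on with
  | empty => exact ⟨0, by simp⟩
  | @insert v S hvS ih =>
    obtain ⟨lam, hlam⟩ := ih fun w hw => hS w (Finset.mem_insert_of_mem hw)
    have hv : v ≠ 0 := hS v (Finset.mem_insert_self v S)
    set B : Set ℝ := ⋃ w ∈ insert v S, {t : ℝ | (∑ i, lam i * w i) + t * (∑ i, v i * w i) = 0}
      with hBdef
    have hBfin : B.Finite := by
      refine Set.Finite.biUnion (insert v S : Finset _).finite_toSet fun w hw => ?_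
      rcases Finset.mem_insert.mp hw with rfl | hw'
      · refine finite_root_set (Or.inr ?_)
        have hpos : 0 < ∑ i, w i * w i := by
          have : ∃ i, w i ≠ 0 := by
            by_contra hcon
            push_neg at hcon
            exact hv (funext hcon)
          obtain ⟨i, hi⟩ := this
          apply Finset.sum_pos' (fun j _ => mul_self_nonneg (w j))
          exact ⟨i, Finset.mem_univ i, mul_self_pos.mpr hi⟩
        exact ne_of_gt hpos
      · exact finite_root_set (Or.inl (hlam w hw'))
    obtain ⟨t, ht⟩ := hBfin.infinite_compl.nonempty
    refine ⟨fun i => lam i + t * v i, ?_⟩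
    intro w hw
    have hsum : (∑ i, (lam i + t * v i) * w i)
        = (∑ i, lam i * w i) + t * (∑ i, v i * w i) := by
      rw [Finset.mul_sum, ← Finset.sum_add_distrib]
      congr 1
      funext i
      ring
    rw [hsum]
    intro hzero
    exact ht (Set.mem_biUnion hw hzero)

/-- A linear functional which is nonzero and injective on a finite set. -/
lemma exists_injOn_dot {m : ℕ} (hm : 0 < m) (F : Set (Fin m → ℝ)) (hF : F.Finite) :
    ∃ lam : Fin m → ℝ, lam ≠ 0 ∧ Set.InjOn (fun p : Fin m → ℝ => ∑ i, lam i * p i) F := by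
  classical
  have hFF : ((F ×ˢ F) ∩ {pq : (Fin m → ℝ) × (Fin m → ℝ) | pq.1 ≠ pq.2}).Finite :=
    ((hF.prod hF).inter_of_left _)
  set S : Finset (Fin m → ℝ) :=
    insert (fun _ => 1) ((hFF.image fun pq => pq.1 - pq.2).toFinset) with hSdef
  have hS : ∀ v ∈ S, v ≠ 0 := by
    intro v hv
    rcases Finset.mem_insert.mp hv with rfl | hv'
    · intro hcon
      have := congrFun hcon ⟨0, hm⟩
      norm_num at this
    · rw [Set.Finite.mem_toFinset] at hv'
      obtain ⟨pq, ⟨-, hne⟩, rfl⟩ := hv'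
      exact sub_ne_zero_of_ne hne
  obtain ⟨lam, hlam⟩ := exists_forall_dot_ne_zero S hS
  refine ⟨lam, ?_, ?_⟩
  · intro hcon
    have h1 := hlam (fun _ => 1) (Finset.mem_insert_self _ _)
    apply h1
    rw [hcon]
    simp
  · intro p hp q hq heq
    by_contra hne
    have hmem : p - q ∈ S := by
      rw [hSdef]
      apply Finset.mem_insert_of_mem
      rw [Set.Finite.mem_toFinset]
      exact ⟨(p, q), ⟨⟨hp, hq⟩, hne⟩, rfl⟩
    apply hlam (p - q) hmem
    have heq' : (∑ i, lam i * p i) = ∑ i, lam i * q i := heq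
    simp only [Pi.sub_apply, mul_sub]
    rw [Finset.sum_sub_distrib, heq', sub_self]

/-- In a subspace all whose nonzero elements have at least two accumulation points,
any linearly independent family of `d` vectors has joint accumulation set of size at least `d`. -/
lemma le_ncard_jointAcc (M : Submodule ℝ Linf)
    (hM : ∀ z ∈ M, z ≠ 0 → (accPtsL z).Finite ∧ 2 ≤ (accPtsL z).ncard)
    {d : ℕ} (z : Fin d → Linf) (hz : ∀ i, z i ∈ M) (hind : LinearIndependent ℝ z) :
    d ≤ (jointAcc z).ncard := by
  classical
  have hne0 : ∀ i, z i ≠ 0 := fun i => hind.ne_zero i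
  have hfin : ∀ i, (accPtsL (z i)).Finite := fun i => (hM _ (hz i) (hne0 i)).1
  have hF : (jointAcc z).Finite := jointAcc_finite z hfin
  by_contra hcon
  push_neg at hcon
  -- the span of the joint accumulation set is a proper subspace
  haveI := hF.fintype
  have hrank : Module.finrank ℝ ↥(Submodule.span ℝ (jointAcc z)) < d := by
    have h1 := finrank_span_le_card (R := ℝ) (jointAcc z)
    rw [← Set.ncard_eq_toFinset_card'] at h1
    omega
  have hlt : Submodule.span ℝ (jointAcc z) < ⊤ := by
    rcases lt_or_eq_of_le (le_top (a := Submodule.span ℝ (jointAcc z))) with h | h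
    · exact h
    · exfalso
      rw [h, finrank_top, Module.finrank_fin_fun] at hrank
      omega
  obtain ⟨f, hf0, hfbot⟩ :=
    Submodule.exists_dual_map_eq_bot_of_lt_top hlt inferInstance
  set lam : Fin d → ℝ := fun i => f fun j => if i = j then 1 else 0 with hlamdef
  have hfp : ∀ p : Fin d → ℝ, f p = ∑ i, lam i * p i := by
    intro p
    rw [LinearMap.pi_apply_eq_sum_univ f p]
    exact Finset.sum_congr rfl fun i _ => by rw [smul_eq_mul, mul_comm]
  have hzero : ∀ p ∈ jointAcc z, (∑ i, lam i * p i) = 0 := by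
    intro p hp
    have hmem : f p ∈ (Submodule.span ℝ (jointAcc z)).map f :=
      Submodule.mem_map_of_mem (Submodule.subset_span hp)
    rw [hfbot] at hmem
    rw [← hfp p]
    exact (Submodule.mem_bot ℝ).mp hmem
  have hlamne : lam ≠ 0 := by
    intro hcon0
    apply hf0
    apply LinearMap.ext
    intro p
    rw [hfp p, hcon0]
    simp
  set zlam : Linf := ∑ i, lam i • z i with hzlamdef
  have hzlamM : zlam ∈ M := Submodule.sum_mem _ fun i _ => Submodule.smul_mem _ _ (hz i)
  have hzlamne : zlam ≠ 0 := by
    intro hcon0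
    apply hlamne
    funext i
    exact Fintype.linearIndependent_iff.mp hind lam hcon0 i
  have himg : accPtsL zlam ⊆ {0} := by
    rw [hzlamdef, accPtsL_sum_smul]
    rintro a ⟨p, hp, rfl⟩
    exact hzero p hp
  have hle1 : (accPtsL zlam).ncard ≤ 1 := by
    have := Set.ncard_le_ncard himg (Set.finite_singleton 0)
    simpa using this
  have := (hM zlam hzlamM hzlamne).2
  omega

/-- Main induction: joint accumulation sets of independent families in the subspace stay small. -/
lemma jointAcc_ncard_lt (n : ℕ → ℕ) (hn : ∀ k, 1 ≤ k → n k ^ 2 < n (k + 1)) (K : Set ℕ)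
    (M : Submodule ℝ Linf)
    (hM : ∀ z ∈ M, z ≠ 0 → (accPtsL z).Finite ∧ 2 ≤ (accPtsL z).ncard ∧
      ∀ k ∈ K, ¬ (n k ≤ (accPtsL z).ncard ∧ (accPtsL z).ncard < n (k + 1)))
    (k : ℕ) (hk1 : 1 ≤ k) (hkK : k ∈ K) (hk2 : 2 ≤ n k) :
    ∀ d (z : Fin d → Linf), (∀ i, z i ∈ M) → LinearIndependent ℝ z →
      (∀ i, (accPtsL (z i)).ncard < n k) → (jointAcc z).ncard < n k := by
  intro d
  induction d with
  | zero =>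
    intro z _ _ _
    have := Set.ncard_le_one_of_subsingleton (jointAcc z)
    omega
  | succ d ih =>
    intro z hz hind hcard
    have hne0 : ∀ i, z i ≠ 0 := fun i => hind.ne_zero i
    have hfin : ∀ i, (accPtsL (z i)).Finite := fun i => (hM _ (hz i) (hne0 i)).1
    have hF : (jointAcc z).Finite := jointAcc_finite z hfin
    have hF' : (jointAcc (z ∘ Fin.castSucc)).Finite :=
      jointAcc_finite _ fun i => hfin (Fin.castSucc i)
    have hind' : LinearIndependent ℝ (z ∘ Fin.castSucc) :=
      hind.comp Fin.castSucc (Fin.castSucc_injective d)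
    have hF'lt : (jointAcc (z ∘ Fin.castSucc)).ncard < n k :=
      ih (z ∘ Fin.castSucc) (fun i => hz _) hind' (fun i => hcard _)
    have hFle : (jointAcc z).ncard < n (k + 1) := by
      have h1 := jointAcc_ncard_succ z hF' (hfin (Fin.last d))
      have h2 := hcard (Fin.last d)
      have h3 : (jointAcc z).ncard < n k * n k := by
        have hpos : 0 < n k := by omega
        calc (jointAcc z).ncard
            ≤ (jointAcc (z ∘ Fin.castSucc)).ncard * (accPtsL (z (Fin.last d))).ncard := h1
          _ < n k * n k := by
              apply Nat.mul_lt_mul_of_lt_of_lt hF'lt h2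
      have := hn k hk1
      nlinarith [this, h3]
    obtain ⟨lam, hlamne, hlaminj⟩ := exists_injOn_dot (Nat.succ_pos d) (jointAcc z) hF
    set zlam : Linf := ∑ i, lam i • z i with hzlamdef
    have hzlamM : zlam ∈ M := Submodule.sum_mem _ fun i _ => Submodule.smul_mem _ _ (hz i)
    have hzlamne : zlam ≠ 0 := by
      intro hcon0
      apply hlamne
      funext i
      exact Fintype.linearIndependent_iff.mp hind lam hcon0 i
    have hcardeq : (accPtsL zlam).ncard = (jointAcc z).ncard := by
      rw [hzlamdef, accPtsL_sum_smul]
      exact Set.ncard_image_of_injOn hlaminj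
    have hforb := (hM zlam hzlamM hzlamne).2.2 k hkK
    rw [hcardeq] at hforb
    by_contra hcon
    push_neg at hcon
    exact hforb ⟨hcon, hFle⟩

lemma jointAcc_one_ncard_le (w : Fin 1 → Linf) (h : (accPtsL (w 0)).Finite) :
    (jointAcc w).ncard ≤ (accPtsL (w 0)).ncard := by
  refine Set.ncard_le_ncard_of_injOn (fun p => p 0) ?_ ?_ h
  · rintro p ⟨φ, hφ, hp⟩
    exact ⟨φ, hφ, hp 0⟩
  · intro p _ q _ hpq
    funext i
    have : i = 0 := Subsingleton.elim i 0
    rw [this]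
    exact hpq

lemma exists_good_k (n : ℕ → ℕ) (hn : ∀ k, 1 ≤ k → n k ^ 2 < n (k + 1)) (K : Set ℕ)
    (hK : K.Infinite) (N : ℕ) : ∃ k ∈ K, 1 ≤ k ∧ 2 ≤ n k ∧ N < n k := by
  have hone : ∀ j, 1 ≤ n (j + 2) := by
    intro j
    induction j with
    | zero =>
      have := hn 1 le_rfl
      nlinarith [sq_nonneg (n 1)]
    | succ j ihj =>
      have := hn (j + 2) (by omega)
      nlinarith
  have hgrow : ∀ j, j + 1 ≤ n (j + 2) := by
    intro j
    induction j with
    | zero => exact hone 0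
    | succ j ihj =>
      have h1 := hn (j + 2) (by omega)
      have h2 := hone j
      nlinarith
  obtain ⟨k, hkK, hk⟩ := hK.exists_gt (N + 2)
  have hg := hgrow (k - 2)
  have hk2 : k - 2 + 2 = k := by omega
  rw [hk2] at hg
  exact ⟨k, hkK, by omega, by omega, by omega⟩

/-- For a good index `k`, the elements of `M` with fewer than `n k` accumulation points form a
finite-dimensional subspace. -/
lemma exists_finite_span (n : ℕ → ℕ) (hn : ∀ k, 1 ≤ k → n k ^ 2 < n (k + 1)) (K : Set ℕ)
    (M : Submodule ℝ Linf)
    (hM : ∀ z ∈ M, z ≠ 0 → (accPtsL z).Finite ∧ 2 ≤ (accPtsL z).ncard ∧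
      ∀ k ∈ K, ¬ (n k ≤ (accPtsL z).ncard ∧ (accPtsL z).ncard < n (k + 1)))
    (k : ℕ) (hk1 : 1 ≤ k) (hkK : k ∈ K) (hk2 : 2 ≤ n k) :
    ∃ S : Set Linf, S.Finite ∧ (∀ v ∈ S, v ∈ M) ∧
      ∀ v ∈ M, (v = 0 ∨ (accPtsL v).ncard < n k) → v ∈ Submodule.span ℝ S := by
  classical
  have hadd : ∀ a b : Linf, (a ∈ M ∧ (a = 0 ∨ (accPtsL a).ncard < n k)) →
      (b ∈ M ∧ (b = 0 ∨ (accPtsL b).ncard < n k)) →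
      (a + b ∈ M ∧ (a + b = 0 ∨ (accPtsL (a + b)).ncard < n k)) := by
    rintro a b ⟨haM, ha⟩ ⟨hbM, hb⟩
    refine ⟨M.add_mem haM hbM, ?_⟩
    rcases eq_or_ne a 0 with rfl | hane
    · simpa using hb
    rcases eq_or_ne b 0 with rfl | hbne
    · simpa using ha
    rcases eq_or_ne (a + b) 0 with habe | habne
    · exact Or.inl habe
    right
    have ha' := ha.resolve_left hane
    have hb' := hb.resolve_left hbne
    have hafin := (hM a haM hane).1
    have hbfin := (hM b hbM hbne).1
    set w : Fin 2 → Linf := ![a, b] with hwdef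
    have hw0 : w 0 = a := rfl
    have hw1 : w 1 = b := rfl
    have hwc0 : (w ∘ Fin.castSucc) 0 = a := rfl
    have hwl : w (Fin.last 1) = b := rfl
    have hfinc : (accPtsL ((w ∘ Fin.castSucc) 0)).Finite := by rw [hwc0]; exact hafin
    have hfinl : (accPtsL (w (Fin.last 1))).Finite := by rw [hwl]; exact hbfin
    have hJ'fin : (jointAcc (w ∘ Fin.castSucc)).Finite := by
      apply jointAcc_finite
      intro i
      have : i = 0 := Subsingleton.elim i 0
      rw [this]
      exact hfinc
    have heq : a + b = ∑ i, (fun _ : Fin 2 => (1 : ℝ)) i • w i := by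
      rw [Fin.sum_univ_two]
      simp [hw0, hw1]
    have himg : accPtsL (a + b)
        = (fun p : Fin 2 → ℝ => ∑ i, (fun _ : Fin 2 => (1 : ℝ)) i * p i) '' jointAcc w := by
      rw [heq, accPtsL_sum_smul]
    have hchain : (accPtsL (a + b)).ncard < n k * n k := by
      rw [himg]
      calc ((fun p : Fin 2 → ℝ => ∑ i, (fun _ : Fin 2 => (1 : ℝ)) i * p i) '' jointAcc w).ncard
          ≤ (jointAcc w).ncard := Set.ncard_image_le (jointAcc_finite w ?_)
        _ ≤ (jointAcc (w ∘ Fin.castSucc)).ncard * (accPtsL (w (Fin.last 1))).ncard :=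
            jointAcc_ncard_succ w hJ'fin hfinl
        _ ≤ (accPtsL ((w ∘ Fin.castSucc) 0)).ncard * (accPtsL (w (Fin.last 1))).ncard :=
            Nat.mul_le_mul_right _ (jointAcc_one_ncard_le _ hfinc)
        _ < n k * n k := by
            rw [hwc0, hwl]
            exact Nat.mul_lt_mul_of_lt_of_lt ha' hb'
      · intro i
        fin_cases i
        · exact hafin
        · exact hbfin
    have hlt : (accPtsL (a + b)).ncard < n (k + 1) := by
      have := hn k hk1
      nlinarith
    have hforb := (hM (a + b) (M.add_mem haM hbM) habne).2.2 k hkK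
    omega
  have hsmul : ∀ (c : ℝ) (v : Linf), (v ∈ M ∧ (v = 0 ∨ (accPtsL v).ncard < n k)) →
      (c • v ∈ M ∧ (c • v = 0 ∨ (accPtsL (c • v)).ncard < n k)) := by
    rintro c v ⟨hvM, hv⟩
    refine ⟨M.smul_mem c hvM, ?_⟩
    rcases hv with rfl | hv
    · left; simp
    rcases eq_or_ne v 0 with rfl | hvne
    · left; simp
    right
    exact lt_of_le_of_lt (ncard_accPtsL_smul_le v (hM v hvM hvne).1) hv
  set Mk : Submodule ℝ Linf :=
    { carrier := {v : Linf | v ∈ M ∧ (v = 0 ∨ (accPtsL v).ncard < n k)}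
      add_mem' := fun ha hb => hadd _ _ ha hb
      zero_mem' := ⟨M.zero_mem, Or.inl rfl⟩
      smul_mem' := fun c v hv => hsmul c v hv } with hMkdef
  -- `Mk` has rank at most `n k`
  have hMweak : ∀ z ∈ M, z ≠ 0 → (accPtsL z).Finite ∧ 2 ≤ (accPtsL z).ncard :=
    fun z hz hzne => ⟨(hM z hz hzne).1, (hM z hz hzne).2.1⟩
  have hrank : Module.rank ℝ ↥Mk ≤ (n k : Cardinal) := by
    apply rank_le
    intro s hs
    have hind1 : LinearIndependent ℝ (fun i : s => ((i : ↥Mk) : Linf)) :=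
      hs.map' Mk.subtype (Submodule.ker_subtype Mk)
    set z : Fin s.card → Linf := (fun i : s => ((i : ↥Mk) : Linf)) ∘ s.equivFin.symm with hzdef
    have hind2 : LinearIndependent ℝ z := hind1.comp _ s.equivFin.symm.injective
    have hz : ∀ j, z j ∈ M := fun j => ((s.equivFin.symm j : ↥Mk).2 : _ ∧ _).1
    have hcard : ∀ j, (accPtsL (z j)).ncard < n k := by
      intro j
      have hne := hind2.ne_zero j
      have hmem := ((s.equivFin.symm j : ↥Mk).2 : _ ∧ _).2
      exact hmem.resolve_left hne
    have h1 := le_ncard_jointAcc M hMweak z hz hind2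
    have h2 := jointAcc_ncard_lt n hn K M hM k hk1 hkK hk2 s.card z hz hind2 hcard
    exact_mod_cast Nat.le_of_lt_succ (by omega)
  haveI hnoeth : IsNoetherian ℝ ↥Mk :=
    IsNoetherian.iff_rank_lt_aleph0.mpr (hrank.trans_lt (Cardinal.nat_lt_aleph0 _))
  haveI hfin : Module.Finite ℝ ↥Mk := IsNoetherian.iff_fg.mp hnoeth
  obtain ⟨T, hT⟩ := Module.Finite.iff_fg.mp hfin
  refine ⟨↑T, T.finite_toSet, ?_, ?_⟩
  · intro v hv
    have : v ∈ Mk := by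
      rw [← hT]
      exact Submodule.subset_span hv
    exact this.1
  · intro v hvM hv
    have : v ∈ Mk := ⟨hvM, hv⟩
    rw [← hT] at this
    exact this

theorem countable_basis_of_fast_gaps (n : ℕ → ℕ) (hn : ∀ k, 1 ≤ k → n k ^ 2 < n (k + 1))
    (K : Set ℕ) (hK : K.Infinite) :
    (∀ M : Submodule ℝ Linf,
      (∀ z ∈ M, z ≠ 0 → (accPtsL z).Finite ∧ 2 ≤ (accPtsL z).ncard ∧
        ∀ k ∈ K, ¬ (n k ≤ (accPtsL z).ncard ∧ (accPtsL z).ncard < n (k + 1))) →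
      ∃ s : Set Linf, s.Countable ∧ s ⊆ M ∧ M ≤ Submodule.span ℝ s) ∧
    ¬ ∃ M : Submodule ℝ Linf, Dense (M : Set Linf) ∧ ¬ Module.Finite ℝ M ∧
      ∀ z ∈ M, z ≠ 0 → (accPtsL z).Finite ∧ 2 ≤ (accPtsL z).ncard ∧
        ∀ k ∈ K, ¬ (n k ≤ (accPtsL z).ncard ∧ (accPtsL z).ncard < n (k + 1)) := by
  classical
  have part1 : ∀ M : Submodule ℝ Linf,
      (∀ z ∈ M, z ≠ 0 → (accPtsL z).Finite ∧ 2 ≤ (accPtsL z).ncard ∧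
        ∀ k ∈ K, ¬ (n k ≤ (accPtsL z).ncard ∧ (accPtsL z).ncard < n (k + 1))) →
      ∃ s : Set Linf, s.Countable ∧ s ⊆ M ∧ M ≤ Submodule.span ℝ s := by
    intro M hM
    have hchoice : ∀ k : {k : ℕ // k ∈ K ∧ 1 ≤ k ∧ 2 ≤ n k}, ∃ S : Set Linf, S.Finite ∧
        (∀ v ∈ S, v ∈ M) ∧
        ∀ v ∈ M, (v = 0 ∨ (accPtsL v).ncard < n k.1) → v ∈ Submodule.span ℝ S :=
      fun k => exists_finite_span n hn K M hM k.1 k.2.2.1 k.2.1 k.2.2.2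
    choose S hSfin hSsub hSspan using hchoice
    refine ⟨⋃ k, S k, Set.countable_iUnion fun k => (hSfin k).countable, ?_, ?_⟩
    · intro v hv
      obtain ⟨k, hk⟩ := Set.mem_iUnion.mp hv
      exact hSsub k v hk
    · intro v hv
      rcases eq_or_ne v 0 with rfl | hvne
      · exact Submodule.zero_mem _
      · obtain ⟨k, hkK, hk1, hk2, hkN⟩ := exists_good_k n hn K hK ((accPtsL v).ncard)
        have hmem := hSspan ⟨k, hkK, hk1, hk2⟩ v hv (Or.inr hkN)
        exact Submodule.span_mono (Set.subset_iUnion S ⟨k, hkK, hk1, hk2⟩) hmem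
  refine ⟨part1, ?_⟩
  rintro ⟨M, hdense, -, hM⟩
  obtain ⟨s, hsc, -, hsub⟩ := part1 M hM
  have hsep : TopologicalSpace.SeparableSpace Linf := by
    rw [← TopologicalSpace.isSeparable_univ_iff]
    have h1 : TopologicalSpace.IsSeparable (Submodule.span ℝ s : Set Linf) :=
      hsc.isSeparable.span
    apply h1.closure.mono
    have h3 : closure (M : Set Linf) = Set.univ := hdense.closure_eq
    rw [← h3]
    exact closure_mono fun x hx => hsub hx
  -- the uncountable 1-separated family of indicator sequences
  have hmem : ∀ S : Set ℕ, Memℓp (fun m => if m ∈ S then (1 : ℝ) else 0) ∞ := by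
    intro S
    apply memℓp_infty
    refine ⟨1, ?_⟩
    rintro r ⟨m, rfl⟩
    dsimp
    split <;> simp
  set f : Set ℕ → Linf := fun S => ⟨fun m => if m ∈ S then (1 : ℝ) else 0, hmem S⟩ with hfdef
  have hdist : ∀ S T : Set ℕ, S ≠ T → 1 ≤ dist (f S) (f T) := by
    intro S T hST
    obtain ⟨m, hm⟩ : ∃ m, ¬(m ∈ S ↔ m ∈ T) := by
      by_contra hcon
      push_neg at hcon
      exact hST (Set.ext hcon)
    have h1 : |((f S - f T : Linf) : ℕ → ℝ) m| = 1 := by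
      rw [lp.coeFn_sub]
      simp only [Pi.sub_apply, hfdef]
      by_cases hS : m ∈ S <;> by_cases hT : m ∈ T <;>
        simp [hS, hT] at hm ⊢
    rw [dist_eq_norm]
    calc (1 : ℝ) = |((f S - f T : Linf) : ℕ → ℝ) m| := h1.symm
      _ ≤ ‖f S - f T‖ := abs_coe_le _ m
  obtain ⟨D, hDc, hDd⟩ := TopologicalSpace.exists_countable_dense Linf
  have hchoose : ∀ S : Set ℕ, ∃ x, x ∈ D ∧ dist (f S) x < 1 / 2 := by
    intro S
    obtain ⟨x, hx⟩ := Metric.dense_iff.mp hDd (f S) (1 / 2) (by norm_num)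
    exact ⟨x, hx.2, by
      have := hx.1
      rw [Metric.mem_ball] at this
      rwa [dist_comm]⟩
  choose g hgD hgdist using hchoose
  haveI : Countable ↥D := hDc.to_subtype
  obtain ⟨e, he⟩ := Countable.exists_injective_nat ↥D
  have hinj : Function.Injective (fun S : Set ℕ => e ⟨g S, hgD S⟩) := by
    intro S T h
    have hg : g S = g T := congrArg Subtype.val (he h)
    by_contra hST
    have h1 := hdist S T hST
    have h2 : dist (f S) (f T) < 1 := by
      calc dist (f S) (f T) ≤ dist (f S) (g S) + dist (g S) (f T) := dist_triangle _ _ _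
        _ = dist (f S) (g S) + dist (f T) (g T) := by rw [hg, dist_comm (g T) (f T)]
        _ < 1 / 2 + 1 / 2 := by
            have := hgdist S
            have := hgdist T
            linarith [hgdist S, hgdist T]
        _ = 1 := by norm_num
    linarith
  exact Function.cantor_injective _ hinj
end
end

section
/- For every n ≥ 2, any linear subspace M of ℓ∞ with M \ {0} ⊆ { x : 2 ≤ |L_x| ≤ n } has dimension at most n−1; moreover, if M has dimension ≥ n, then M contains a vector z with |L_z| ≥ n+1 or a nonzero vector with |L_z| ≤ 1. -/
open Filter Topology Set ENNReal

noncomputable section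

namespace ExactLin

variable {n : ℕ}

lemma abs_apply_le (z : Linf) (k : ℕ) : |z k| ≤ ‖z‖ := by
  have := lp.norm_apply_le_norm (E := fun _ : ℕ => ℝ) ENNReal.top_ne_zero z k
  rwa [Real.norm_eq_abs] at this

lemma bw_sub (x : ℕ → ℝ) (C : ℝ) (h : ∀ k, |x k| ≤ C) (φ : ℕ → ℕ) (hφ : StrictMono φ) :
    ∃ a : ℝ, ∃ σ : ℕ → ℕ, StrictMono σ ∧ Tendsto (fun k => x (φ (σ k))) atTop (𝓝 a) := by
  obtain ⟨a, -, σ, hσ, ha⟩ := tendsto_subseq_of_bounded (x := fun k => x (φ k))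
    (Metric.isBounded_Icc (-C) C) (fun k => Set.mem_Icc.mpr (abs_le.mp (h (φ k))))
  exact ⟨a, σ, hσ, ha⟩

lemma multi_sub : ∀ (m : ℕ) (x : Fin m → ℕ → ℝ) (_ : ∀ i, ∃ C, ∀ k, |x i k| ≤ C)
    (φ : ℕ → ℕ) (_ : StrictMono φ),
    ∃ σ : ℕ → ℕ, StrictMono σ ∧ ∀ i, ∃ a : ℝ, Tendsto (fun k => x i (φ (σ k))) atTop (𝓝 a) := by
  intro m
  induction m with
  | zero => exact fun x h φ hφ => ⟨id, strictMono_id, fun i => i.elim0⟩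
  | succ m ih =>
    intro x h φ hφ
    obtain ⟨σ₁, hσ₁, h₁⟩ := ih (fun i => x i.succ) (fun i => h i.succ) φ hφ
    obtain ⟨C0, hC0⟩ := h 0
    obtain ⟨a0, σ₂, hσ₂, h0⟩ := bw_sub (x 0) C0 hC0 (φ ∘ σ₁) (hφ.comp hσ₁)
    refine ⟨σ₁ ∘ σ₂, hσ₁.comp hσ₂, ?_⟩
    intro i
    refine Fin.cases ?_ ?_ i
    · exact ⟨a0, h0⟩
    · intro j
      obtain ⟨a, ha⟩ := h₁ j
      exact ⟨a, ha.comp hσ₂.tendsto_atTop⟩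

lemma sum_eval (v : Fin n → Linf) (c : Fin n → ℝ) (k : ℕ) :
    (∑ i, c i • v i : Linf) k = ∑ i, c i * (v i k) := by
  have h1 : ⇑(∑ i, c i • v i : Linf) = ∑ i, ⇑(c i • v i) := lp.coeFn_sum _ _
  have h2 : ∀ i : Fin n, ⇑(c i • v i) = c i • ⇑(v i) := fun i => lp.coeFn_smul _ _
  rw [h1]; simp [h2]

/-- Simultaneous subsequential limit vectors of the family `v`. -/
def Sset (v : Fin n → Linf) : Set (Fin n → ℝ) :=
  {a | ∃ φ : ℕ → ℕ, StrictMono φ ∧ ∀ i, Tendsto (fun k => v i (φ k)) atTop (𝓝 (a i))}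

lemma tendsto_comb (v : Fin n → Linf) (c : Fin n → ℝ) (a : Fin n → ℝ) (φ : ℕ → ℕ)
    (h : ∀ i, Tendsto (fun k => v i (φ k)) atTop (𝓝 (a i))) :
    Tendsto (fun k => (∑ i, c i • v i : Linf) (φ k)) atTop (𝓝 (∑ i, c i * a i)) := by
  simp only [sum_eval]
  exact tendsto_finset_sum _ (fun i _ => ((h i).const_mul (c i)))

lemma mem_acc (v : Fin n → Linf) (c : Fin n → ℝ) (a : Fin n → ℝ) (ha : a ∈ Sset v) :
    (∑ i, c i * a i) ∈ accPtsL (∑ i, c i • v i) := by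
  obtain ⟨φ, hφ, h⟩ := ha
  exact ⟨φ, hφ, tendsto_comb v c a φ h⟩

lemma exists_S_rep (v : Fin n → Linf) (c : Fin n → ℝ) (α : ℝ)
    (hα : α ∈ accPtsL (∑ i, c i • v i)) : ∃ a ∈ Sset v, ∑ i, c i * a i = α := by
  obtain ⟨φ, hφ, hz⟩ := hα
  obtain ⟨σ, hσ, hconv⟩ := multi_sub n (fun i k => v i k)
    (fun i => ⟨‖v i‖, fun k => abs_apply_le (v i) k⟩) φ hφ
  choose a ha using hconv
  refine ⟨a, ⟨φ ∘ σ, hφ.comp hσ, ha⟩, ?_⟩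
  have h1 : Tendsto (fun k => (∑ i, c i • v i : Linf) (φ (σ k))) atTop (𝓝 (∑ i, c i * a i)) :=
    tendsto_comb v c a (φ ∘ σ) ha
  have h2 : Tendsto (fun k => (∑ i, c i • v i : Linf) (φ (σ k))) atTop (𝓝 α) :=
    hz.comp hσ.tendsto_atTop
  exact tendsto_nhds_unique h1 h2

def dotL (d : Fin n → ℝ) : (Fin n → ℝ) →ₗ[ℝ] ℝ := ∑ i, d i • LinearMap.proj i

lemma dotL_apply (d x : Fin n → ℝ) : dotL d x = ∑ i, d i * x i := by
  simp [dotL]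

lemma dotL_ker_ne_top (d : Fin n → ℝ) (hd : d ≠ 0) : LinearMap.ker (dotL d) ≠ ⊤ := by
  intro h
  apply hd
  have h0 : dotL d d = 0 := by
    have : d ∈ LinearMap.ker (dotL d) := by rw [h]; trivial
    simpa using this
  rw [dotL_apply] at h0
  funext i
  have := (Finset.sum_eq_zero_iff_of_nonneg (fun i _ => mul_self_nonneg (d i))).mp h0 i
    (Finset.mem_univ i)
  exact mul_self_eq_zero.mp this

lemma avoid (T : Finset (Fin n → ℝ)) :
    ∃ c : Fin n → ℝ, ∀ t ∈ T, ∀ t' ∈ T, t ≠ t' → ∑ i, c i * t i ≠ ∑ i, c i * t' i := by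
  classical
  set F : Finset (Subspace ℝ (Fin n → ℝ)) :=
    ((T ×ˢ T).filter (fun p => p.1 ≠ p.2)).image (fun p => LinearMap.ker (dotL (p.1 - p.2)))
    with hF
  have hFtop : ⊤ ∉ F := by
    rw [hF]
    simp only [Finset.mem_image, Finset.mem_filter, not_exists]
    rintro p ⟨⟨-, hne⟩, hker⟩
    exact dotL_ker_ne_top _ (sub_ne_zero.mpr hne) hker
  obtain ⟨c, hc⟩ := (ne_univ_iff_exists_notMem _).mp (Subspace.biUnion_ne_univ_of_top_notMem hFtop)
  refine ⟨c, fun t ht t' ht' hne heq => ?_⟩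
  apply hc
  refine Set.mem_biUnion (?_ : LinearMap.ker (dotL (t - t')) ∈ F) ?_
  · rw [hF]
    exact Finset.mem_image.mpr ⟨(t, t'), Finset.mem_filter.mpr
      ⟨Finset.mem_product.mpr ⟨ht, ht'⟩, hne⟩, rfl⟩
  · show c ∈ LinearMap.ker (dotL (t - t'))
    rw [LinearMap.mem_ker, dotL_apply]
    have : ∀ i, (t - t') i * c i = c i * t i - c i * t' i := by
      intro i; simp [Pi.sub_apply]; ring
    simp only [this, Finset.sum_sub_distrib, heq, sub_self]

lemma span_top (S : Set (Fin n → ℝ))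
    (hsep : ∀ c : Fin n → ℝ, c ≠ 0 → ∃ a ∈ S, ∃ b ∈ S, ∑ i, c i * a i ≠ ∑ i, c i * b i) :
    Submodule.span ℝ {d : Fin n → ℝ | ∃ a ∈ S, ∃ b ∈ S, d = a - b} = ⊤ := by
  by_contra h
  obtain ⟨f, hf0, hfmap⟩ := Submodule.exists_dual_map_eq_bot_of_lt_top
    (lt_top_iff_ne_top.mpr h) inferInstance
  set c : Fin n → ℝ := fun i => f (fun j => if i = j then 1 else 0) with hcdef
  have hfc : ∀ x, f x = ∑ i, x i * c i := by
    intro x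
    rw [LinearMap.pi_apply_eq_sum_univ f x]
    simp [hcdef, smul_eq_mul]
  have hc : c ≠ 0 := by
    intro h0
    apply hf0
    apply LinearMap.ext
    intro x
    rw [hfc]
    simp [h0]
  obtain ⟨a, ha, b, hb, hne⟩ := hsep c hc
  apply hne
  have hmem : a - b ∈ Submodule.span ℝ {d : Fin n → ℝ | ∃ a ∈ S, ∃ b ∈ S, d = a - b} :=
    Submodule.subset_span ⟨a, ha, b, hb, rfl⟩
  have hf : f (a - b) = 0 := by
    have h1 : f (a - b) ∈ Submodule.map f (Submodule.span ℝ _) :=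
      Submodule.mem_map_of_mem hmem
    rw [hfmap] at h1
    simpa using h1
  rw [hfc] at hf
  have : ∀ i, (a - b) i * c i = c i * a i - c i * b i := by
    intro i; simp [Pi.sub_apply]; ring
  simp only [this, Finset.sum_sub_distrib] at hf
  linarith [hf]

lemma sep (M : Submodule ℝ Linf)
    (hM : ∀ z ∈ M, z ≠ 0 → (accPtsL z).Finite ∧ 2 ≤ (accPtsL z).ncard ∧ (accPtsL z).ncard ≤ n)
    (v : Fin n → Linf) (hvM : ∀ i, v i ∈ M) (hv : LinearIndependent ℝ v)
    (c : Fin n → ℝ) (hc : c ≠ 0) :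
    ∃ a ∈ Sset v, ∃ b ∈ Sset v, ∑ i, c i * a i ≠ ∑ i, c i * b i := by
  set z : Linf := ∑ i, c i • v i with hz
  have hzM : z ∈ M := Submodule.sum_mem _ fun i _ => Submodule.smul_mem _ _ (hvM i)
  have hz0 : z ≠ 0 := by
    intro h0
    apply hc
    funext i
    exact Fintype.linearIndependent_iff.mp hv c h0 i
  obtain ⟨hfin, h2, -⟩ := hM z hzM hz0
  obtain ⟨α, hα, β, hβ, hab⟩ := (Set.one_lt_ncard hfin).mp (by omega)
  obtain ⟨a, ha, haα⟩ := exists_S_rep v c α hα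
  obtain ⟨b, hb, hbβ⟩ := exists_S_rep v c β hβ
  exact ⟨a, ha, b, hb, by rw [haα, hbβ]; exact hab⟩

lemma core (n : ℕ) (hn : 2 ≤ n) (M : Submodule ℝ Linf)
    (hM : ∀ z ∈ M, z ≠ 0 → (accPtsL z).Finite ∧ 2 ≤ (accPtsL z).ncard ∧ (accPtsL z).ncard ≤ n)
    (hr : (n : Cardinal) ≤ Module.rank ℝ M) : False := by
  classical
  haveI : Module.Free ℝ ↥M := Module.Free.of_divisionRing ℝ ↥M
  -- extract a linearly independent family of size n in M
  obtain ⟨s, hcard, hli⟩ := (le_rank_iff_exists_linearIndependent_finset (K := ℝ) (V := ↥M)).mp hr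
  have e : Fin n ≃ ↥s := (finCongr hcard.symm).trans s.equivFin.symm
  set f : Fin n → ↥((s : Set ↥M)) := fun i => ⟨(e i : ↥M), by simpa using (e i).2⟩ with hfdef
  have hfinj : Function.Injective f := by
    intro i j h
    apply e.injective
    apply Subtype.ext
    exact congrArg Subtype.val h
  set v : Fin n → Linf := fun i => ((e i : ↥M) : Linf) with hvdef
  have hv : LinearIndependent ℝ v :=
    ((hli.comp f hfinj).map' M.subtype (Submodule.ker_subtype M))
  have hvM : ∀ i, v i ∈ M := fun i => (e i : ↥M).2
  -- the set of limit vectors and differences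
  set S := Sset v with hS
  set D := {d : Fin n → ℝ | ∃ a ∈ S, ∃ b ∈ S, d = a - b} with hD
  have hspan : Submodule.span ℝ D = ⊤ := span_top S (sep M hM v hvM hv)
  -- finite generating subset of D
  have hbas : ∀ i : Fin n, (Pi.basisFun ℝ (Fin n)) i ∈ Submodule.span ℝ D := by
    intro i; rw [hspan]; trivial
  choose t ht hmem using fun i => Submodule.mem_span_finite_of_mem_span (hbas i)
  set T' : Finset (Fin n → ℝ) := Finset.univ.biUnion t with hT'
  have hT'D : (T' : Set (Fin n → ℝ)) ⊆ D := by
    intro d hd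
    simp only [hT', Finset.coe_biUnion, Set.mem_iUnion, Finset.mem_coe] at hd
    obtain ⟨i, -, hdi⟩ := hd
    exact ht i hdi
  have hT'span : Submodule.span ℝ (T' : Set (Fin n → ℝ)) = ⊤ := by
    rw [eq_top_iff, ← (Pi.basisFun ℝ (Fin n)).span_eq]
    apply Submodule.span_le.mpr
    rintro x ⟨i, rfl⟩
    refine Submodule.span_mono ?_ (hmem i)
    intro d hd
    simp only [hT', Finset.coe_biUnion, Set.mem_iUnion, Finset.mem_coe]
    exact ⟨i, Finset.mem_univ i, hd⟩
  -- representatives in S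
  choose A hA B hB hAB using fun (d : ↥T') => hT'D d.2
  set T : Finset (Fin n → ℝ) := T'.attach.image A ∪ T'.attach.image B with hT
  have hTS : ∀ x ∈ T, x ∈ S := by
    intro x hx
    rw [hT, Finset.mem_union] at hx
    rcases hx with hx | hx <;>
      · obtain ⟨d, -, rfl⟩ := Finset.mem_image.mp hx
        first | exact hA d | exact hB d
  have hdiff : ∀ d ∈ T', ∃ x ∈ T, ∃ y ∈ T, d = x - y := by
    intro d hd
    refine ⟨A ⟨d, hd⟩, ?_, B ⟨d, hd⟩, ?_, hAB ⟨d, hd⟩⟩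
    · rw [hT, Finset.mem_union]
      exact Or.inl (Finset.mem_image.mpr ⟨⟨d, hd⟩, Finset.mem_attach _ _, rfl⟩)
    · rw [hT, Finset.mem_union]
      exact Or.inr (Finset.mem_image.mpr ⟨⟨d, hd⟩, Finset.mem_attach _ _, rfl⟩)
  -- T' nonempty
  have hT'ne : T'.Nonempty := by
    rw [Finset.nonempty_iff_ne_empty]
    intro h
    rw [h] at hT'span
    simp only [Finset.coe_empty, Submodule.span_empty] at hT'span
    haveI : Nonempty (Fin n) := ⟨⟨0, by omega⟩⟩
    exact bot_ne_top hT'span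
  obtain ⟨d₀, hd₀⟩ := hT'ne
  obtain ⟨t₀, ht₀T, -, -, -⟩ := hdiff d₀ hd₀
  -- span of shifted T is top
  have himg : Submodule.span ℝ ((T.image (fun x => x - t₀) : Finset (Fin n → ℝ)) :
      Set (Fin n → ℝ)) = ⊤ := by
    rw [eq_top_iff, ← hT'span]
    apply Submodule.span_le.mpr
    intro d hd
    obtain ⟨x, hx, y, hy, rfl⟩ := hdiff d (Finset.mem_coe.mp hd)
    have hx' : x - t₀ ∈ Submodule.span ℝ ((T.image (fun x => x - t₀) : Finset _) : Set _) :=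
      Submodule.subset_span (Finset.mem_coe.mpr (Finset.mem_image.mpr ⟨x, hx, rfl⟩))
    have hy' : y - t₀ ∈ Submodule.span ℝ ((T.image (fun x => x - t₀) : Finset _) : Set _) :=
      Submodule.subset_span (Finset.mem_coe.mpr (Finset.mem_image.mpr ⟨y, hy, rfl⟩))
    have hxy : x - y = (x - t₀) - (y - t₀) := by ring
    rw [hxy]
    exact Submodule.sub_mem _ hx' hy'
  -- erase zero
  have h0img : (0 : Fin n → ℝ) ∈ T.image (fun x => x - t₀) :=
    Finset.mem_image.mpr ⟨t₀, ht₀T, by simp⟩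
  set U : Finset (Fin n → ℝ) := (T.image (fun x => x - t₀)).erase 0 with hU
  have hUspan : Submodule.span ℝ (U : Set (Fin n → ℝ)) = ⊤ := by
    have hins : T.image (fun x => x - t₀) = insert (0 : Fin n → ℝ) U :=
      (Finset.insert_erase h0img).symm
    rw [hins, Finset.coe_insert, Submodule.span_insert_zero] at himg
    exact himg
  -- cardinality bound
  have hcardU : Module.finrank ℝ (Fin n → ℝ) ≤ U.card := by
    have h1 := finrank_span_finset_le_card (R := ℝ) U
    rw [Set.finrank, hUspan, finrank_top] at h1
    exact h1
  rw [Module.finrank_fin_fun] at hcardU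
  have hcardT : n + 1 ≤ T.card := by
    have h2 : U.card = (T.image (fun x => x - t₀)).card - 1 :=
      Finset.card_erase_of_mem h0img
    have h3 : (T.image (fun x => x - t₀)).card ≤ T.card := Finset.card_image_le
    have h4 : 1 ≤ (T.image (fun x => x - t₀)).card :=
      Finset.card_pos.mpr ⟨0, h0img⟩
    omega
  -- separating coefficients
  obtain ⟨c, hcT⟩ := avoid T
  -- c ≠ 0
  obtain ⟨x₁, hx₁, x₂, hx₂, hx12⟩ := Finset.one_lt_card.mp (by omega : 1 < T.card)
  have hc0 : c ≠ 0 := by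
    intro h0
    apply hcT x₁ hx₁ x₂ hx₂ hx12
    simp [h0]
  -- the combination z
  set z : Linf := ∑ i, c i • v i with hzdef
  have hzM : z ∈ M := Submodule.sum_mem _ fun i _ => Submodule.smul_mem _ _ (hvM i)
  have hz0 : z ≠ 0 := by
    intro h0
    apply hc0
    funext i
    exact Fintype.linearIndependent_iff.mp hv c h0 i
  obtain ⟨hfin, -, hle⟩ := hM z hzM hz0
  -- image of T in accumulation points
  set g : (Fin n → ℝ) → ℝ := fun x => ∑ i, c i * x i with hg
  have hsub : ((T.image g : Finset ℝ) : Set ℝ) ⊆ accPtsL z := by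
    intro α hα
    obtain ⟨x, hx, rfl⟩ := Finset.mem_image.mp (Finset.mem_coe.mp hα)
    exact mem_acc v c x (hTS x hx)
  have hinj : Set.InjOn g (T : Set (Fin n → ℝ)) := by
    intro x hx y hy hxy
    by_contra hne
    exact hcT x (Finset.mem_coe.mp hx) y (Finset.mem_coe.mp hy) hne hxy
  have hcardimg : (T.image g).card = T.card := Finset.card_image_of_injOn hinj
  have hfinal : (T.image g).card ≤ (accPtsL z).ncard := by
    have := Set.ncard_le_ncard hsub hfin
    rwa [Set.ncard_coe_finset] at this
  omega

end ExactLin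

theorem exact_lineability_interval (n : ℕ) (hn : 2 ≤ n) :
    (∀ M : Submodule ℝ Linf,
      (∀ z ∈ M, z ≠ 0 → (accPtsL z).Finite ∧ 2 ≤ (accPtsL z).ncard ∧ (accPtsL z).ncard ≤ n) →
      Module.rank ℝ M ≤ (n - 1 : ℕ)) ∧
    (∀ M : Submodule ℝ Linf, (n : Cardinal) ≤ Module.rank ℝ M →
      ∃ z ∈ M, (¬ (accPtsL z).Finite ∨ n + 1 ≤ (accPtsL z).ncard) ∨
        (z ≠ 0 ∧ (accPtsL z).Finite ∧ (accPtsL z).ncard ≤ 1)) := by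
  constructor
  · intro M hM
    by_contra h
    push_neg at h
    have hn' : (n : Cardinal) ≤ Module.rank ℝ M := by
      have heq : (n : Cardinal) = Order.succ ((n - 1 : ℕ) : Cardinal) := by
        rw [← Cardinal.nat_succ]
        congr 1
        omega
      rw [heq]
      exact Order.succ_le_of_lt h
    exact (ExactLin.core n hn M hM hn').elim
  · intro M hr
    by_cases hall : ∀ z ∈ M, z ≠ 0 →
        (accPtsL z).Finite ∧ 2 ≤ (accPtsL z).ncard ∧ (accPtsL z).ncard ≤ n
    · exact (ExactLin.core n hn M hall hr).elim
    · push_neg at hall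
      obtain ⟨z, hzM, hz0, hbad⟩ := hall
      refine ⟨z, hzM, ?_⟩
      by_cases hfin : (accPtsL z).Finite
      · by_cases h1 : (accPtsL z).ncard ≤ 1
        · exact Or.inr ⟨hz0, hfin, h1⟩
        · refine Or.inl (Or.inr ?_)
          have := hbad hfin (by omega)
          omega
      · exact Or.inl (Or.inl hfin)
end
end

section
/- There is no linear isometry φ : ℓ∞ → ℓ∞ whose range, minus the zero vector, consists entirely of sequences with at most countably many accumulation points. Equivalently, L(ℕ ∪ {ω}) ∪ {0} contains no isometric copy of ℓ∞. -/
open Filter Topology Set ENNReal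

noncomputable section

namespace NoIsoAux

/-- A surjection from `ℕ` onto `ℚ`. -/
def qe : ℕ → ℚ := (exists_surjective_nat ℚ).choose

lemma qe_surj : Function.Surjective qe := (exists_surjective_nat ℚ).choose_spec

/-- A dense sequence in `[0,1]`, built from an enumeration of the rationals. -/
def d : ℕ → ℝ := fun n => max 0 (min 1 ((qe n : ℚ) : ℝ))

lemma d_nonneg (n : ℕ) : 0 ≤ d n := le_max_left _ _

lemma d_le_one (n : ℕ) : d n ≤ 1 := max_le zero_le_one (min_le_left _ _)

lemma d_encode (q : ℚ) (h0 : 0 ≤ (q : ℝ)) (h1 : (q : ℝ) ≤ 1) :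
    ∃ n, d n = (q : ℝ) := by
  obtain ⟨n, hn⟩ := qe_surj q
  refine ⟨n, ?_⟩
  unfold d
  rw [hn, min_eq_right h1, max_eq_right h0]

lemma d_dense {t : ℝ} (ht : t ∈ Set.Ioo (0:ℝ) 1) {ε : ℝ} (hε : 0 < ε) :
    ∃ n, |d n - t| < ε := by
  obtain ⟨q, hq1, hq2⟩ := exists_rat_btwn (show max 0 (t - ε) < t by
    rcases ht with ⟨ht0, _⟩
    exact max_lt ht0 (by linarith))
  have h0 : (0:ℝ) ≤ (q:ℝ) := le_of_lt (lt_of_le_of_lt (le_max_left _ _) hq1)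
  have h1 : (q:ℝ) ≤ 1 := le_of_lt (lt_trans hq2 ht.2)
  obtain ⟨n, hn⟩ := d_encode q h0 h1
  refine ⟨n, ?_⟩
  rw [hn]
  have := lt_of_le_of_lt (le_max_right 0 (t - ε)) hq1
  rw [abs_lt]
  constructor <;> linarith

lemma mem_inf {f : ℕ → ℝ} (C : ℝ) (h : ∀ n, |f n| ≤ C) : Memℓp f ∞ := by
  apply memℓp_infty
  refine ⟨C, ?_⟩
  rintro x ⟨n, rfl⟩
  simpa [Real.norm_eq_abs] using h n

/-- The constant-one sequence. -/
def eL : Linf := ⟨fun _ => 1, mem_inf 1 (by intro n; norm_num)⟩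

/-- The dense sequence as an element of ℓ∞. -/
def gL : Linf := ⟨d, mem_inf 1 (fun n => abs_le.2 ⟨by linarith [d_nonneg n], d_le_one n⟩)⟩

/-- The "tent" sequence peaking at `t`. -/
def xL (t : ℝ) : Linf :=
  ⟨fun n => 1 - |d n - t|, mem_inf (2 + |t|) (by
    intro n
    have h1 : |d n - t| ≤ |d n| + |t| := abs_sub _ _
    have h2 : |d n| ≤ 1 := abs_le.2 ⟨by linarith [d_nonneg n], d_le_one n⟩
    have h3 : 0 ≤ |d n - t| := abs_nonneg _
    rw [abs_le]
    constructor <;> [linarith; linarith [abs_nonneg t]])⟩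

lemma eL_apply (n : ℕ) : (eL : Linf) n = 1 := rfl
lemma gL_apply (n : ℕ) : (gL : Linf) n = d n := rfl
lemma xL_apply (t : ℝ) (n : ℕ) : (xL t : Linf) n = 1 - |d n - t| := rfl

lemma apply_sub (A B : Linf) (n : ℕ) : (A - B) n = A n - B n := by
  rw [lp.coeFn_sub]; rfl

lemma apply_sub_smul (A B : Linf) (c : ℝ) (n : ℕ) : (A - c • B) n = A n - c * B n := by
  rw [lp.coeFn_sub, Pi.sub_apply, lp.coeFn_smul]; rfl

lemma abs_apply_le_norm (A : Linf) (n : ℕ) : |A n| ≤ ‖A‖ := by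
  have h := lp.norm_apply_le_norm ENNReal.top_ne_zero A n
  rwa [Real.norm_eq_abs] at h

lemma norm_xL_ge {t : ℝ} (ht : t ∈ Set.Ioo (0:ℝ) 1) : 1 ≤ ‖xL t‖ := by
  by_contra hcon
  push_neg at hcon
  have hε : 0 < 1 - ‖xL t‖ := by linarith
  obtain ⟨n, hn⟩ := d_dense ht hε
  have h1 : 1 - (1 - ‖xL t‖) < (xL t) n := by
    rw [xL_apply]; linarith
  have h2 : (xL t) n ≤ |(xL t) n| := le_abs_self _
  have h3 := abs_apply_le_norm (xL t) n
  linarith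

lemma norm_bound1 {t : ℝ} (ht : t ∈ Set.Ioo (0:ℝ) 1) :
    ‖xL t - (2⁻¹ : ℝ) • gL‖ ≤ 1 - t / 2 := by
  rcases ht with ⟨ht0, ht1⟩
  refine lp.norm_le_of_forall_le (by linarith) ?_
  intro n
  rw [Real.norm_eq_abs, apply_sub_smul, xL_apply, gL_apply]
  have h0 := d_nonneg n
  have h1 := d_le_one n
  rcases abs_cases (d n - t) with ⟨he, hs⟩ | ⟨he, hs⟩ <;> rw [he] <;>
    exact abs_le.2 ⟨by linarith, by linarith⟩

lemma norm_bound2 {t : ℝ} (ht : t ∈ Set.Ioo (0:ℝ) 1) :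
    ‖xL t - (2⁻¹ : ℝ) • (eL - gL)‖ ≤ (1 + t) / 2 := by
  rcases ht with ⟨ht0, ht1⟩
  refine lp.norm_le_of_forall_le (by linarith) ?_
  intro n
  rw [Real.norm_eq_abs, apply_sub_smul, apply_sub, eL_apply, gL_apply, xL_apply]
  have h0 := d_nonneg n
  have h1 := d_le_one n
  rcases abs_cases (d n - t) with ⟨he, hs⟩ | ⟨he, hs⟩ <;> rw [he] <;>
    exact abs_le.2 ⟨by linarith, by linarith⟩

lemma norm_eL : ‖eL‖ ≤ 1 := by
  refine lp.norm_le_of_forall_le zero_le_one ?_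
  intro n
  rw [Real.norm_eq_abs, eL_apply]
  norm_num

/-- Subsequence extraction towards a point approached frequently. -/
lemma exists_subseq_tendsto (a : ℕ → ℝ) (t : ℝ)
    (H : ∀ ε : ℝ, 0 < ε → ∃ᶠ n in atTop, |a n - t| < ε) :
    ∃ φ : ℕ → ℕ, StrictMono φ ∧ Tendsto (fun k => a (φ k)) atTop (𝓝 t) := by
  obtain ⟨φ, hφ, hP⟩ := extraction_forall_of_frequently
    (fun n : ℕ => H (1 / (n + 1)) (by positivity))
  refine ⟨φ, hφ, ?_⟩
  rw [Metric.tendsto_atTop]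
  intro ε hε
  obtain ⟨N, hN⟩ := exists_nat_one_div_lt hε
  refine ⟨N, fun k hk => ?_⟩
  have h1 : (1 : ℝ) / (k + 1) ≤ 1 / (N + 1) := by
    apply one_div_le_one_div_of_le (by positivity)
    have : (N : ℝ) ≤ (k : ℝ) := Nat.cast_le.mpr hk
    linarith
  calc dist (a (φ k)) t = |a (φ k) - t| := Real.dist_eq _ _
    _ < 1 / (k + 1) := hP k
    _ ≤ 1 / (N + 1) := h1
    _ < ε := hN

lemma frequently_of_forall_exists (a : ℕ → ℝ) (t : ℝ)
    (hne : ∀ n, a n ≠ t) (H : ∀ ε : ℝ, 0 < ε → ∃ n, |a n - t| < ε)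
    {ε : ℝ} (hε : 0 < ε) : ∃ᶠ n in atTop, |a n - t| < ε := by
  rw [Nat.frequently_atTop_iff_infinite]
  intro hfin
  obtain ⟨n₀, hn₀⟩ := H ε hε
  have hnem : ({n | |a n - t| < ε}).Nonempty := ⟨n₀, hn₀⟩
  obtain ⟨m, hm, hmin⟩ := Set.exists_min_image _ (fun n => |a n - t|) hfin hnem
  have hmpos : 0 < |a m - t| := abs_pos.2 (sub_ne_zero.2 (hne m))
  obtain ⟨n₁, hn₁⟩ := H (min ε (|a m - t|)) (lt_min hε hmpos)
  have hn₁' : n₁ ∈ {n | |a n - t| < ε} := lt_of_lt_of_le hn₁ (min_le_left _ _)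
  exact absurd (hmin n₁ hn₁') (not_le.2 (lt_of_lt_of_le hn₁ (min_le_right _ _)))

end NoIsoAux

open NoIsoAux

theorem no_isometric_copy_in_countable_accPts :
    ¬ ∃ φ : Linf →ₗᵢ[ℝ] Linf, ∀ x : Linf, x ≠ 0 → (accPtsL (φ x)).Countable := by
  rintro ⟨T, hT⟩
  -- the image of the dense sequence
  set u : Linf := T gL with hu
  have hgne : gL ≠ 0 := by
    intro h
    obtain ⟨m, hm⟩ := d_encode (1/2 : ℚ) (by norm_num) (by norm_num)
    have h0 : d m = 0 := by
      have := congrArg (fun z : Linf => z m) h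
      simpa [gL_apply, lp.coeFn_zero] using this
    rw [hm] at h0
    norm_num at h0
  have hLc : (accPtsL u).Countable := hT gL hgne
  set Bad : Set ℝ := (Set.range fun n => |u n|) ∪ (abs '' accPtsL u) with hBad
  have hBadc : Bad.Countable :=
    (Set.countable_range _).union (hLc.image _)
  -- key approximation: every t ∈ (0,1) is approached by |u n|
  have key : ∀ t ∈ Set.Ioo (0:ℝ) 1, ∀ ε : ℝ, 0 < ε → ∃ n, abs (|u n| - t) < ε := by
    intro t ht ε hε
    rcases ht with ⟨ht0, ht1⟩
    set δ := min (ε / 2) (t / 4) with hδ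
    have hδpos : 0 < δ := lt_min (by linarith) (by linarith)
    have hδε : δ ≤ ε / 2 := min_le_left _ _
    have hδt : δ ≤ t / 4 := min_le_right _ _
    -- find a near-peak coordinate of T (xL t)
    have hn1 : 1 ≤ ‖T (xL t)‖ := by rw [T.norm_map]; exact norm_xL_ge ⟨ht0, ht1⟩
    have hlt : 1 - δ < ⨆ i, ‖(T (xL t)) i‖ := by
      have : (⨆ i, ‖(T (xL t)) i‖) = ‖T (xL t)‖ := (lp.norm_eq_ciSup _).symm
      rw [this]; linarith
    obtain ⟨n, hn⟩ := exists_lt_of_lt_ciSup hlt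
    rw [Real.norm_eq_abs] at hn
    set z : ℝ := (T (xL t)) n with hz
    set U : ℝ := u n with hU
    set V : ℝ := (T (eL - gL)) n with hV
    -- the three estimates
    have b1 : |z - 2⁻¹ * U| ≤ 1 - t / 2 := by
      have h := abs_apply_le_norm (T (xL t) - (2⁻¹ : ℝ) • T gL) n
      rw [apply_sub_smul] at h
      have heq : T (xL t) - (2⁻¹ : ℝ) • T gL = T (xL t - (2⁻¹ : ℝ) • gL) := by
        rw [map_sub, map_smul]
      rw [heq, T.norm_map] at h
      exact le_trans h (norm_bound1 ⟨ht0, ht1⟩)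
    have b2 : |z - 2⁻¹ * V| ≤ (1 + t) / 2 := by
      have h := abs_apply_le_norm (T (xL t) - (2⁻¹ : ℝ) • T (eL - gL)) n
      rw [apply_sub_smul] at h
      have heq : T (xL t) - (2⁻¹ : ℝ) • T (eL - gL) = T (xL t - (2⁻¹ : ℝ) • (eL - gL)) := by
        simp only [map_sub, map_smul]
      rw [heq, T.norm_map] at h
      exact le_trans h (norm_bound2 ⟨ht0, ht1⟩)
    have b3 : |U + V| ≤ 1 := by
      have h := abs_apply_le_norm (T gL + T (eL - gL)) n
      have happ : (T gL + T (eL - gL)) n = U + V := by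
        rw [lp.coeFn_add]; rfl
      rw [happ] at h
      have heq : T gL + T (eL - gL) = T eL := by rw [← map_add]; congr 1; abel
      rw [heq, T.norm_map] at h
      exact le_trans h norm_eL
    obtain ⟨b1a, b1b⟩ := abs_le.1 b1
    obtain ⟨b2a, b2b⟩ := abs_le.1 b2
    obtain ⟨b3a, b3b⟩ := abs_le.1 b3
    refine ⟨n, ?_⟩
    rcases le_or_gt 0 z with hzpos | hzneg
    · have hz' : 1 - δ < z := by rwa [abs_of_nonneg hzpos] at hn
      have hU1 : t - 2 * δ < U := by linarith
      have hV1 : 1 - t - 2 * δ < V := by linarith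
      have hU2 : U < t + 2 * δ := by linarith
      have hUpos : 0 < U := by linarith
      rw [abs_of_pos hUpos, abs_lt]
      constructor <;> linarith
    · have hz' : 1 - δ < -z := by rwa [abs_of_neg hzneg] at hn
      have hU1 : t - 2 * δ < -U := by linarith
      have hV1 : V < t - 1 + 2 * δ := by linarith
      have hU2 : -U < t + 2 * δ := by linarith
      have hUneg : U < 0 := by linarith
      rw [abs_of_neg hUneg, abs_lt]
      constructor <;> linarith
  -- every t ∈ (0,1) lies in the countable set Bad
  have hsub : Set.Ioo (0:ℝ) 1 ⊆ Bad := by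
    intro t ht
    by_cases hmem : ∃ n, |u n| = t
    · exact Or.inl hmem
    push_neg at hmem
    -- extract a subsequence of |u ·| tendsto t
    have hfreq : ∀ ε : ℝ, 0 < ε → ∃ᶠ n in atTop, abs (|u n| - t) < ε :=
      fun ε hε => frequently_of_forall_exists _ t hmem (key t ht) hε
    obtain ⟨φ, hφmono, hφtend⟩ := exists_subseq_tendsto (fun n => |u n|) t hfreq
    -- split according to the sign of u (φ k)
    have hsplit : ({k | 0 ≤ u (φ k)}).Infinite ∨ ({k | u (φ k) < 0}).Infinite := by
      by_contra h
      push_neg at h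
      have : (Set.univ : Set ℕ).Finite := by
        have : (Set.univ : Set ℕ) = {k | 0 ≤ u (φ k)} ∪ {k | u (φ k) < 0} := by
          ext k; simp [le_or_gt]
        rw [this]; exact h.1.union h.2
      exact Set.infinite_univ this
    have habs : ∀ s : ℝ, (∃ ψ : ℕ → ℕ, StrictMono ψ ∧
        Tendsto (fun j => u (φ (ψ j))) atTop (𝓝 s)) → s ∈ accPtsL u := by
      rintro s ⟨ψ, hψ, hts⟩
      exact ⟨φ ∘ ψ, hφmono.comp hψ, hts⟩
    rcases hsplit with hinf | hinf
    · -- u (φ k) = |u (φ k)| frequently, so t ∈ accPtsL u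
      have hfr : ∀ ε : ℝ, 0 < ε → ∃ᶠ k in atTop, |u (φ k) - t| < ε := by
        intro ε hε
        have hev : ∀ᶠ k in atTop, abs (|u (φ k)| - t) < ε := by
          rw [Metric.tendsto_atTop] at hφtend
          obtain ⟨N, hN⟩ := hφtend ε hε
          exact eventually_atTop.2 ⟨N, fun k hk => by
            have := hN k hk; rwa [Real.dist_eq] at this⟩
        have hfr' : ∃ᶠ k in atTop, 0 ≤ u (φ k) :=
          Nat.frequently_atTop_iff_infinite.2 hinf
        refine (hfr'.and_eventually hev).mono ?_
        rintro k ⟨hk1, hk2⟩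
        rwa [abs_of_nonneg hk1] at hk2
      obtain ⟨ψ, hψ, hts⟩ := exists_subseq_tendsto (fun k => u (φ k)) t hfr
      have : t ∈ accPtsL u := habs t ⟨ψ, hψ, hts⟩
      exact Or.inr ⟨t, this, abs_of_pos ht.1⟩
    · -- u (φ k) = -|u (φ k)| frequently, so -t ∈ accPtsL u
      have hfr : ∀ ε : ℝ, 0 < ε → ∃ᶠ k in atTop, |u (φ k) - (-t)| < ε := by
        intro ε hε
        have hev : ∀ᶠ k in atTop, abs (|u (φ k)| - t) < ε := by
          rw [Metric.tendsto_atTop] at hφtend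
          obtain ⟨N, hN⟩ := hφtend ε hε
          exact eventually_atTop.2 ⟨N, fun k hk => by
            have := hN k hk; rwa [Real.dist_eq] at this⟩
        have hfr' : ∃ᶠ k in atTop, u (φ k) < 0 :=
          Nat.frequently_atTop_iff_infinite.2 hinf
        refine (hfr'.and_eventually hev).mono ?_
        rintro k ⟨hk1, hk2⟩
        rw [abs_of_neg hk1] at hk2
        rw [abs_lt] at hk2 ⊢
        constructor <;> linarith [hk2.1, hk2.2]
      obtain ⟨ψ, hψ, hts⟩ := exists_subseq_tendsto (fun k => u (φ k)) (-t) hfr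
      have : (-t) ∈ accPtsL u := habs (-t) ⟨ψ, hψ, hts⟩
      exact Or.inr ⟨-t, this, by rw [abs_neg, abs_of_pos ht.1]⟩
  -- contradiction: (0,1) would be countable
  have hcount : (Set.Ioo (0:ℝ) 1).Countable := hBadc.mono hsub
  have hzero := hcount.measure_zero MeasureTheory.volume
  rw [Real.volume_Ioo] at hzero
  norm_num at hzero
end
end

section
/- There exists a closed, non-separable linear subspace M of ℓ∞ such that every nonzero x ∈ M has exactly countably infinitely many accumulation points. -/
open Filter Topology Set ENNReal
open scoped Pointwise

noncomputable section

namespace ANS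
open scoped Classical

/-- the values `1 - 2^{-(k+1)}`. -/
def bb (k : ℕ) : ℝ := 1 - (2⁻¹ : ℝ)^(k+1)

lemma bb_lb (k : ℕ) : (2⁻¹:ℝ) ≤ bb k := by
  have h : (2⁻¹:ℝ)^(k+1) ≤ (2⁻¹:ℝ)^1 :=
    pow_le_pow_of_le_one (by norm_num) (by norm_num) (by omega)
  simp only [bb]; nlinarith
lemma bb_lt_one (k : ℕ) : bb k < 1 := by
  have : (0:ℝ) < (2⁻¹:ℝ)^(k+1) := by positivity
  simp only [bb]; linarith
lemma bb_le_one (k : ℕ) : |bb k| ≤ 1 := by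
  rw [abs_le]; refine ⟨by linarith [bb_lb k], (bb_lt_one k).le⟩
lemma bb_strictMono : StrictMono bb := by
  intro k l h
  have : (2⁻¹:ℝ)^(l+1) < (2⁻¹:ℝ)^(k+1) :=
    pow_lt_pow_right_of_lt_one₀ (by norm_num) (by norm_num) (by omega)
  simp only [bb]; linarith
lemma bb_tendsto : Tendsto bb atTop (𝓝 1) := by
  have h : Tendsto (fun k : ℕ => (2⁻¹:ℝ)^(k+1)) atTop (𝓝 0) := by
    have := tendsto_pow_atTop_nhds_zero_of_lt_one (by norm_num : (0:ℝ) ≤ 2⁻¹) (by norm_num)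
    exact this.comp (tendsto_add_atTop_nat 1)
  have h2 : Tendsto (fun k : ℕ => 1 - (2⁻¹:ℝ)^(k+1)) atTop (𝓝 (1-0)) :=
    tendsto_const_nhds.sub h
  rw [sub_zero] at h2
  exact h2
lemma bb_zero : bb 0 = 2⁻¹ := by norm_num [bb]

def em (m : ℕ) : ℕ × ℕ := Nat.unpair (Nat.unpair m).2

lemma em_spec (s n k : ℕ) : em (Nat.pair s (Nat.pair n k)) = (n, k) := by
  simp [em]

def idx (r : ℝ) (n : ℕ) : ℕ := Nat.pair n ⌊(n:ℝ)*r⌋₊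

lemma idx_eq_iff {r s : ℝ} {j n : ℕ} :
    idx r j = idx s n ↔ (j = n ∧ ⌊(j:ℝ)*r⌋₊ = ⌊(n:ℝ)*s⌋₊) := by
  constructor
  · intro h
    have h1 := congrArg Nat.unpair h
    simp only [idx, Nat.unpair_pair] at h1
    exact ⟨congrArg Prod.fst h1, congrArg Prod.snd h1⟩
  · rintro ⟨rfl, h⟩; simp [idx, h]

lemma idx_injective (r : ℝ) : Function.Injective (idx r) := by
  intro j n h; exact (idx_eq_iff.1 h).1

def Sfun (y : ℕ → ℝ) (m : ℕ) : ℝ := y (em m).1 * bb (em m).2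

lemma Sfun_spec (y : ℕ → ℝ) (s n k : ℕ) :
    Sfun y (Nat.pair s (Nat.pair n k)) = y n * bb k := by
  simp [Sfun, em_spec]

/-- The defining predicate for the "base" space. -/
def Pred (y : ℕ → ℝ) : Prop :=
  (∀ r : ℝ, ∃ L, Tendsto (fun n => y (idx r n)) atTop (𝓝 L)) ∧
  (∃ L : ℝ, ∀ ε > (0:ℝ), ∃ T : Finset ℝ,
    {n : ℕ | ε ≤ |y n - L| ∧ ∀ r ∈ T, ∀ j, idx r j ≠ n}.Finite)


lemma floor_lt_floor {u v : ℝ} (hu : 0 ≤ u) (huv : u < v) :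
    ∀ᶠ n : ℕ in atTop, ⌊(n:ℝ)*u⌋₊ < ⌊(n:ℝ)*v⌋₊ := by
  obtain ⟨N, hN⟩ := exists_nat_gt (1/(v-u))
  filter_upwards [eventually_ge_atTop N] with n hn
  have hvu : (0:ℝ) < v - u := by linarith
  have hnN : (1/(v-u)) < (n:ℝ) := lt_of_lt_of_le hN (by exact_mod_cast hn)
  have h1 : 1 < (n:ℝ) * (v-u) := by
    rw [div_lt_iff₀ hvu] at hnN; linarith
  have h2 : ((⌊(n:ℝ)*u⌋₊ : ℝ)) ≤ (n:ℝ)*u := Nat.floor_le (by positivity)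
  have h3 : (n:ℝ)*v - 1 < ⌊(n:ℝ)*v⌋₊ := Nat.sub_one_lt_floor _
  have : ((⌊(n:ℝ)*u⌋₊ : ℝ)) < ((⌊(n:ℝ)*v⌋₊ : ℝ)) := by nlinarith
  exact_mod_cast this

lemma floor_ne {r s : ℝ} (hs : 1 ≤ s) (hrs : r ≠ s) :
    ∀ᶠ n : ℕ in atTop, ⌊(n:ℝ)*r⌋₊ ≠ ⌊(n:ℝ)*s⌋₊ := by
  rcases lt_or_gt_of_ne hrs with h | h
  · have hu : max r 0 < s := max_lt h (by linarith)
    filter_upwards [floor_lt_floor (le_max_right r 0) hu] with n hn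
    have : ⌊(n:ℝ)*r⌋₊ ≤ ⌊(n:ℝ)*(max r 0)⌋₊ :=
      Nat.floor_mono (mul_le_mul_of_nonneg_left (le_max_left r 0) (by positivity))
    omega
  · filter_upwards [floor_lt_floor (by linarith : (0:ℝ) ≤ s) h] with n hn
    omega

/-- generator base sequences: indicator of the range of `idx s`. -/
def ys (s : ℝ) : ℕ → ℝ := fun n => if ∃ j, idx s j = n then 1 else 0

lemma ys_nonneg (s : ℝ) (n : ℕ) : 0 ≤ ys s n := by
  unfold ys; split <;> norm_num

lemma ys_le_one (s : ℝ) (n : ℕ) : ys s n ≤ 1 := by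
  unfold ys; split <;> norm_num

lemma ys_idx (s r : ℝ) (n : ℕ) :
    ys s (idx r n) = if ⌊(n:ℝ)*s⌋₊ = ⌊(n:ℝ)*r⌋₊ then 1 else 0 := by
  by_cases h : ⌊(n:ℝ)*s⌋₊ = ⌊(n:ℝ)*r⌋₊
  · rw [if_pos h]; unfold ys; rw [if_pos ⟨n, idx_eq_iff.2 ⟨rfl, h⟩⟩]
  · rw [if_neg h]; unfold ys; rw [if_neg]
    rintro ⟨j, hj⟩
    obtain ⟨rfl, h2⟩ := idx_eq_iff.1 hj
    exact h h2

lemma pred_ys {s : ℝ} (hs : 1 ≤ s) : Pred (ys s) := by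
  constructor
  · intro r
    by_cases hr : r = s
    · refine ⟨1, ?_⟩
      subst hr
      have : (fun n => ys r (idx r n)) = fun _ => (1:ℝ) := by
        funext n; rw [ys_idx]; simp
      rw [this]; exact tendsto_const_nhds
    · refine ⟨0, ?_⟩
      have hev : (fun n => ys s (idx r n)) =ᶠ[atTop] (fun _ => (0:ℝ)) := by
        filter_upwards [floor_ne hs hr] with n hn
        rw [ys_idx, if_neg]
        intro hc; exact hn hc.symm
      exact Tendsto.congr' hev.symm tendsto_const_nhds
  · refine ⟨0, fun ε hε => ⟨{s}, ?_⟩⟩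
    apply Set.Finite.subset Set.finite_empty
    rintro n ⟨h1, h2⟩
    by_cases hex : ∃ j, idx s j = n
    · obtain ⟨j, hj⟩ := hex
      exact (h2 s (Finset.mem_singleton_self s) j hj).elim
    · rw [sub_zero, show ys s n = 0 from if_neg hex, abs_zero] at h1
      linarith


lemma abs4 (a b c d : ℝ) : |a - d| ≤ |a - b| + |b - c| + |c - d| := by
  calc |a - d| ≤ |a - c| + |c - d| := abs_sub_le a c d
    _ ≤ (|a - b| + |b - c|) + |c - d| := by linarith [abs_sub_le a b c]

lemma abs5 (a b c d e : ℝ) : |a - e| ≤ |a - b| + |b - c| + |c - d| + |d - e| := by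
  calc |a - e| ≤ |a - d| + |d - e| := abs_sub_le a d e
    _ ≤ (|a - b| + |b - c| + |c - d|) + |d - e| := by linarith [abs4 a b c d]

lemma pred_zero : Pred (fun _ => (0:ℝ)) := by
  constructor
  · exact fun r => ⟨0, tendsto_const_nhds⟩
  · refine ⟨0, fun ε hε => ⟨∅, Set.Finite.subset Set.finite_empty ?_⟩⟩
    rintro n ⟨hn1, -⟩
    simp only [sub_zero, abs_zero] at hn1
    linarith

lemma pred_add {y1 y2 : ℕ → ℝ} (h1 : Pred y1) (h2 : Pred y2) :
    Pred (fun n => y1 n + y2 n) := by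
  obtain ⟨hi1, L1, hii1⟩ := h1
  obtain ⟨hi2, L2, hii2⟩ := h2
  constructor
  · intro r
    obtain ⟨A, hA⟩ := hi1 r; obtain ⟨B, hB⟩ := hi2 r
    exact ⟨A + B, hA.add hB⟩
  · refine ⟨L1 + L2, fun ε hε => ?_⟩
    obtain ⟨T1, hT1⟩ := hii1 (ε/2) (by linarith)
    obtain ⟨T2, hT2⟩ := hii2 (ε/2) (by linarith)
    refine ⟨T1 ∪ T2, Set.Finite.subset (hT1.union hT2) ?_⟩
    rintro n ⟨hn1, hn2⟩
    have havoid1 : ∀ r ∈ T1, ∀ j, idx r j ≠ n :=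
      fun r hr => hn2 r (Finset.mem_union_left _ hr)
    have havoid2 : ∀ r ∈ T2, ∀ j, idx r j ≠ n :=
      fun r hr => hn2 r (Finset.mem_union_right _ hr)
    by_cases hc : ε/2 ≤ |y1 n - L1|
    · exact Or.inl ⟨hc, havoid1⟩
    · refine Or.inr ⟨?_, havoid2⟩
      push_neg at hc
      have habs : |y1 n + y2 n - (L1 + L2)| ≤ |y1 n - L1| + |y2 n - L2| := by
        have h := abs_add_le (y1 n - L1) (y2 n - L2)
        have : y1 n + y2 n - (L1 + L2) = (y1 n - L1) + (y2 n - L2) := by ring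
        rw [this]; exact h
      linarith

lemma pred_smul (c : ℝ) {y : ℕ → ℝ} (h : Pred y) : Pred (fun n => c * y n) := by
  obtain ⟨hi, L, hii⟩ := h
  constructor
  · intro r; obtain ⟨A, hA⟩ := hi r; exact ⟨c * A, hA.const_mul c⟩
  · by_cases hc : c = 0
    · subst hc
      refine ⟨0, fun ε hε => ⟨∅, Set.Finite.subset Set.finite_empty ?_⟩⟩
      rintro n ⟨hn1, -⟩
      simp only [zero_mul, sub_zero, abs_zero] at hn1
      linarith
    · refine ⟨c * L, fun ε hε => ?_⟩
      obtain ⟨T, hT⟩ := hii (ε/|c|) (by positivity)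
      refine ⟨T, Set.Finite.subset hT ?_⟩
      rintro n ⟨hn1, hn2⟩
      refine ⟨?_, hn2⟩
      have habs : |c * y n - c * L| = |c| * |y n - L| := by
        rw [← mul_sub, abs_mul]
      rw [div_le_iff₀' (abs_pos.2 hc)]
      rw [habs] at hn1
      exact hn1

lemma exists_avoid (T : Finset ℝ) (F : Set ℕ) (hF : F.Finite) :
    ∃ n, (∀ r ∈ T, ∀ j, idx r j ≠ n) ∧ n ∉ F := by
  have h1 : (↑(T.image fun r => ⌊r⌋₊) : Set ℕ).Finite := (T.image _).finite_toSet
  have h2 : ((fun k => Nat.pair 1 k) ⁻¹' F).Finite := by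
    apply hF.preimage
    intro a _ b _ hab
    have := congrArg Nat.unpair hab
    simpa using this
  obtain ⟨k, hk⟩ := (Set.Finite.infinite_compl (h1.union h2)).nonempty
  rw [Set.mem_compl_iff, Set.mem_union] at hk
  push_neg at hk
  obtain ⟨hk1, hk2⟩ := hk
  refine ⟨Nat.pair 1 k, ?_, hk2⟩
  intro r hr j hj
  have h := congrArg Nat.unpair hj
  simp only [idx, Nat.unpair_pair, Prod.mk.injEq] at h
  obtain ⟨hj1, hj2⟩ := h
  subst hj1
  apply hk1
  simp only [Finset.coe_image, Set.mem_image, Finset.mem_coe]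
  refine ⟨r, hr, ?_⟩
  rw [← hj2]
  norm_num

lemma pred_of_approx {y : ℕ → ℝ}
    (h : ∀ ε > (0:ℝ), ∃ z : ℕ → ℝ, Pred z ∧ ∀ n, |z n - y n| ≤ ε) : Pred y := by
  constructor
  · intro r
    apply cauchySeq_tendsto_of_complete
    rw [Metric.cauchySeq_iff]
    intro ε hε
    obtain ⟨z, hzP, hzA⟩ := h (ε/4) (by linarith)
    obtain ⟨A, hA⟩ := hzP.1 r
    obtain ⟨N, hN⟩ := (Metric.cauchySeq_iff.1 hA.cauchySeq) (ε/4) (by linarith)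
    refine ⟨N, fun a ha b hb => ?_⟩
    have h1 := hzA (idx r a)
    have h2 := hzA (idx r b)
    have h3 := hN a ha b hb
    rw [Real.dist_eq] at h3 ⊢
    calc |y (idx r a) - y (idx r b)|
        ≤ |y (idx r a) - z (idx r a)| + |z (idx r a) - z (idx r b)|
            + |z (idx r b) - y (idx r b)| := abs4 _ _ _ _
      _ < ε := by
          rw [abs_sub_comm] at h1
          linarith
  · have hz : ∀ m : ℕ, ∃ z : ℕ → ℝ, Pred z ∧ ∀ n, |z n - y n| ≤ 1/(m+1) :=
      fun m => h _ (by positivity)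
    choose z hzP hzA using hz
    choose Lm hLm using fun m => (hzP m).2
    have key : ∀ m m' : ℕ, |Lm m - Lm m'| ≤ 1/(m+1) + 1/(m'+1) := by
      intro m m'
      have hδ : ∀ δ > (0:ℝ), |Lm m - Lm m'| ≤ 1/(m+1) + 1/(m'+1) + 2*δ := by
        intro δ hδ0
        obtain ⟨T1, hT1⟩ := hLm m δ hδ0
        obtain ⟨T2, hT2⟩ := hLm m' δ hδ0
        obtain ⟨n, hn1, hn2⟩ := exists_avoid (T1 ∪ T2) _ (hT1.union hT2)
        rw [Set.mem_union] at hn2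
        push_neg at hn2
        obtain ⟨hf1, hf2⟩ := hn2
        have hA1 : ∀ r ∈ T1, ∀ j, idx r j ≠ n :=
          fun r hr => hn1 r (Finset.mem_union_left _ hr)
        have hA2 : ∀ r ∈ T2, ∀ j, idx r j ≠ n :=
          fun r hr => hn1 r (Finset.mem_union_right _ hr)
        have hb1 : |z m n - Lm m| < δ := by
          by_contra hcon; push_neg at hcon
          exact hf1 ⟨hcon, hA1⟩
        have hb2 : |z m' n - Lm m'| < δ := by
          by_contra hcon; push_neg at hcon
          exact hf2 ⟨hcon, hA2⟩
        have hy1 := hzA m n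
        have hy2 := hzA m' n
        have c1 : |Lm m - z m n| < δ := by rw [abs_sub_comm]; exact hb1
        have c4 : |z m' n - Lm m'| < δ := hb2
        have c3 : |y n - z m' n| ≤ 1/(m'+1) := by rw [abs_sub_comm]; exact hy2
        calc |Lm m - Lm m'|
            ≤ |Lm m - z m n| + |z m n - y n| + |y n - z m' n| + |z m' n - Lm m'| :=
              abs5 _ _ _ _ _
          _ ≤ 1/(m+1) + 1/(m'+1) + 2*δ := by linarith
      by_contra hcon; push_neg at hcon
      have := hδ ((|Lm m - Lm m'| - (1/(m+1) + 1/(m'+1)))/3) (by linarith)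
      linarith
    have hLc : CauchySeq Lm := by
      rw [Metric.cauchySeq_iff]
      intro ε hε
      obtain ⟨M, hM⟩ := exists_nat_one_div_lt (ε := ε/2) (by linarith)
      refine ⟨M, fun a ha b hb => ?_⟩
      rw [Real.dist_eq]
      have h1 : 1/((a:ℝ)+1) ≤ 1/((M:ℝ)+1) := by
        apply one_div_le_one_div_of_le (by positivity)
        exact_mod_cast Nat.succ_le_succ ha
      have h2 : 1/((b:ℝ)+1) ≤ 1/((M:ℝ)+1) := by
        apply one_div_le_one_div_of_le (by positivity)
        exact_mod_cast Nat.succ_le_succ hb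
      have := key a b
      linarith
    obtain ⟨L, hL⟩ := cauchySeq_tendsto_of_complete hLc
    refine ⟨L, fun ε hε => ?_⟩
    obtain ⟨M1, hM1⟩ := exists_nat_one_div_lt (ε := ε/3) (by linarith)
    obtain ⟨M2, hM2⟩ := (Metric.tendsto_atTop.1 hL) (ε/3) (by linarith)
    set m := max M1 M2 with hm
    obtain ⟨T, hT⟩ := hLm m (ε/3) (by linarith)
    refine ⟨T, Set.Finite.subset hT ?_⟩
    rintro n ⟨hn1, hn2⟩
    refine ⟨?_, hn2⟩
    have hd : |Lm m - L| < ε/3 := by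
      have := hM2 m (le_max_right _ _)
      rwa [Real.dist_eq] at this
    have ha : |z m n - y n| ≤ 1/((m:ℝ)+1) := hzA m n
    have hmm : 1/((m:ℝ)+1) ≤ 1/((M1:ℝ)+1) := by
      apply one_div_le_one_div_of_le (by positivity)
      exact_mod_cast Nat.succ_le_succ (le_max_left M1 M2)
    have htri : |y n - L| ≤ |y n - z m n| + |z m n - Lm m| + |Lm m - L| :=
      abs4 _ _ _ _
    rw [abs_sub_comm] at ha
    by_contra hcon; push_neg at hcon
    linarith


lemma accPts_countable_of_pred {y : ℕ → ℝ} (h : Pred y) : (accPts y).Countable := by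
  obtain ⟨hi, Li, hii⟩ := h
  choose L hL using hi
  choose T hT using fun m : ℕ => hii (1/((m:ℝ)+1)) (by positivity)
  have hC : (insert Li (⋃ m : ℕ, L '' (T m : Set ℝ))).Countable :=
    (Set.countable_iUnion fun m => ((T m).finite_toSet.image L).countable).insert Li
  refine Set.Countable.mono ?_ hC
  rintro a ⟨φ, hφ, hconv⟩
  by_cases haL : a = Li
  · exact Set.mem_insert_iff.2 (Or.inl haL)
  · have hpos : 0 < |a - Li| := abs_pos.2 (sub_ne_zero.2 haL)
    obtain ⟨m, hm⟩ := exists_nat_one_div_lt (ε := |a - Li|/2) (by linarith)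
    have hεpos : (0:ℝ) < 1/((m:ℝ)+1) := by positivity
    obtain ⟨K, hK⟩ := Metric.tendsto_atTop.1 hconv (1/((m:ℝ)+1)) hεpos
    set Fset := {n : ℕ | 1/((m:ℝ)+1) ≤ |y n - Li| ∧ ∀ r ∈ T m, ∀ j, idx r j ≠ n} with hFset
    have hFfin : Fset.Finite := hT m
    have hcover : ∀ k, K ≤ k → φ k ∉ Fset → ∃ r ∈ T m, ∃ j, idx r j = φ k := by
      intro k hk hnF
      have hd := hK k hk
      rw [Real.dist_eq] at hd
      have h1 : 1/((m:ℝ)+1) ≤ |y (φ k) - Li| := by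
        have htri : |a - Li| ≤ |a - y (φ k)| + |y (φ k) - Li| := abs_sub_le _ _ _
        rw [abs_sub_comm] at hd
        linarith
      by_contra hcon
      push_neg at hcon
      exact hnF ⟨h1, fun r hr j => hcon r hr j⟩
    -- pigeonhole
    set G := (Set.Iio K ∪ φ ⁻¹' Fset)ᶜ with hG
    have hGinf : G.Infinite :=
      Set.Finite.infinite_compl
        ((Set.finite_Iio K).union (hFfin.preimage hφ.injective.injOn))
    obtain ⟨r, hrT, hEr⟩ : ∃ r ∈ T m, {k | ∃ j, idx r j = φ k}.Infinite := by
      by_contra hcon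
      push_neg at hcon
      apply hGinf
      apply Set.Finite.subset
        (Set.Finite.biUnion (T m).finite_toSet fun r hr =>
          (hcon r hr))
      intro k hk
      rw [hG, Set.mem_compl_iff, Set.mem_union] at hk
      push_neg at hk
      obtain ⟨hk1, hk2⟩ := hk
      rw [Set.mem_Iio, not_lt] at hk1
      obtain ⟨rr, hrr, j, hj⟩ := hcover k hk1 hk2
      exact Set.mem_biUnion hrr ⟨j, hj⟩
    -- a = L r
    have hkey : ∀ δ > (0:ℝ), |a - L r| < 2*δ := by
      intro δ hδ
      obtain ⟨K₁, hK₁⟩ := Metric.tendsto_atTop.1 hconv δ hδ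
      obtain ⟨N, hN⟩ := Metric.tendsto_atTop.1 (hL r) δ hδ
      have hSfin : (φ ⁻¹' (idx r '' Set.Iio N)).Finite :=
        (((Set.finite_Iio N).image _).preimage hφ.injective.injOn)
      obtain ⟨k, hk⟩ :=
        (hEr.diff ((Set.finite_Iio K₁).union hSfin)).nonempty
      obtain ⟨⟨j, hj⟩, hk2⟩ := hk
      rw [Set.mem_union] at hk2
      push_neg at hk2
      obtain ⟨hkK, hkS⟩ := hk2
      rw [Set.mem_Iio, not_lt] at hkK
      have hjN : N ≤ j := by
        by_contra hcon
        push_neg at hcon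
        exact hkS ⟨j, hcon, hj⟩
      have hd1 := hK₁ k hkK
      have hd2 := hN j hjN
      rw [Real.dist_eq] at hd1 hd2
      have htri : |a - L r| ≤ |a - y (φ k)| + |y (φ k) - L r| := abs_sub_le _ _ _
      rw [abs_sub_comm] at hd1
      rw [← hj] at hd1 htri
      linarith
    have : a = L r := by
      by_contra hcon
      have hpos2 : 0 < |a - L r| := abs_pos.2 (sub_ne_zero.2 hcon)
      have := hkey (|a - L r|/2) (by linarith)
      linarith
    refine Set.mem_insert_iff.2 (Or.inr ?_)
    exact Set.mem_iUnion.2 ⟨m, ⟨r, hrT, this.symm⟩⟩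


lemma mem_accPts_of_closure {u : ℕ → ℝ} {a : ℝ}
    (ha : a ∈ closure (Set.range u)) (hnr : a ∉ Set.range u) : a ∈ accPts u := by
  have H : ∀ N : ℕ, ∀ ε : ℝ, 0 < ε → ∃ n, N < n ∧ |u n - a| < ε := by
    by_contra hcon
    push_neg at hcon
    obtain ⟨N, ε, hε, hall⟩ := hcon
    set F : Finset ℝ := insert ε ((Finset.range (N+1)).image fun n => |u n - a|) with hF
    have hFne : F.Nonempty := ⟨ε, Finset.mem_insert_self _ _⟩
    set δ := F.min' hFne with hδ
    have hall_pos : ∀ x ∈ F, (0:ℝ) < x := by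
      intro x hx
      rw [hF] at hx
      rcases Finset.mem_insert.1 hx with h | h
      · rw [h]; exact hε
      · obtain ⟨n, -, hn⟩ := Finset.mem_image.1 h
        rw [← hn]; exact abs_pos.2 (sub_ne_zero.2 fun hc => hnr ⟨n, hc⟩)
    have hδpos : 0 < δ := hall_pos _ (F.min'_mem hFne)
    have hlb : ∀ n, δ ≤ |u n - a| := by
      intro n
      by_cases hn : n ≤ N
      · exact F.min'_le _ (Finset.mem_insert.2 (Or.inr
          (Finset.mem_image.2 ⟨n, Finset.mem_range.2 (by omega), rfl⟩)))
      · have h1 : δ ≤ ε := F.min'_le _ (Finset.mem_insert_self _ _)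
        have h2 := hall n (by omega)
        linarith
    obtain ⟨b, ⟨n, rfl⟩, hb⟩ := Metric.mem_closure_iff.1 ha δ hδpos
    rw [Real.dist_eq, abs_sub_comm] at hb
    exact absurd hb (not_lt.2 (hlb n))
  let ψ : ℕ → ℕ := fun j => Nat.rec (Classical.choose (H 0 1 one_pos))
      (fun j ih => Classical.choose (H ih (1/((j:ℝ)+2)) (by positivity))) j
  have hψs : ∀ j : ℕ, ψ j < ψ (j+1) ∧ |u (ψ (j+1)) - a| < 1/((j:ℝ)+2) := fun j =>
    Classical.choose_spec (H (ψ j) (1/((j:ℝ)+2)) (by positivity))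
  refine ⟨ψ, strictMono_nat_of_lt_succ fun j => (hψs j).1, ?_⟩
  rw [Metric.tendsto_atTop]
  intro ε hε
  obtain ⟨M, hM⟩ := exists_nat_one_div_lt (ε := ε) hε
  refine ⟨M+1, fun j hj => ?_⟩
  obtain ⟨i, rfl⟩ := Nat.exists_eq_succ_of_ne_zero (n := j) (by omega)
  have h1 : |u (ψ (i+1)) - a| < 1/((i:ℝ)+2) := (hψs i).2
  have h2 : 1/((i:ℝ)+2) ≤ 1/((M:ℝ)+1) := by
    apply one_div_le_one_div_of_le (by positivity)
    have h3 : (M:ℝ) ≤ (i:ℝ) + 1 := by exact_mod_cast (by omega : M ≤ i + 1)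
    linarith
  rw [Real.dist_eq]
  linarith

lemma closure_range_countable {u : ℕ → ℝ} (h : (accPts u).Countable) :
    (closure (Set.range u)).Countable := by
  refine Set.Countable.mono ?_ ((Set.countable_range u).union h)
  intro a ha
  by_cases hr : a ∈ Set.range u
  · exact Or.inl hr
  · exact Or.inr (mem_accPts_of_closure ha hr)


lemma accPts_subset_closure (u : ℕ → ℝ) : accPts u ⊆ closure (Set.range u) := by
  rintro a ⟨φ, hφ, hconv⟩
  exact mem_closure_of_tendsto hconv (Eventually.of_forall fun k => ⟨φ k, rfl⟩)

/-- The submodule. -/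
def MS : Submodule ℝ Linf where
  carrier := {x : Linf | ∃ y : ℕ → ℝ, Pred y ∧ ∀ m, x m = Sfun y m}
  add_mem' := by
    rintro x1 x2 ⟨y1, hy1, he1⟩ ⟨y2, hy2, he2⟩
    refine ⟨fun n => y1 n + y2 n, pred_add hy1 hy2, fun m => ?_⟩
    have h : (x1 + x2) m = x1 m + x2 m := by rw [lp.coeFn_add]; rfl
    rw [h, he1 m, he2 m]
    simp only [Sfun]
    ring
  zero_mem' := by
    refine ⟨fun _ => 0, pred_zero, fun m => ?_⟩
    have h : (0 : Linf) m = 0 := by rw [lp.coeFn_zero]; rfl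
    rw [h]
    simp [Sfun]
  smul_mem' := by
    rintro c x ⟨y, hy, he⟩
    refine ⟨fun n => c * y n, pred_smul c hy, fun m => ?_⟩
    have h : (c • x) m = c * x m := by rw [lp.coeFn_smul]; rfl
    rw [h, he m]
    simp only [Sfun]
    ring

lemma coord_le (z : Linf) (m : ℕ) : |z m| ≤ ‖z‖ :=
  lp.norm_apply_le_norm ENNReal.top_ne_zero z m

set_option synthInstance.maxHeartbeats 1000000 in
lemma isClosed_MS : IsClosed (MS : Set Linf) := by
  apply IsSeqClosed.isClosed
  intro u x hu hux
  choose yq hyqP hyqE using hu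
  set Y : ℕ → ℝ := fun n => 2 * x (Nat.pair 0 (Nat.pair n 0)) with hY
  have hdist : ∀ (q : ℕ) (m : ℕ), |(u q) m - x m| ≤ ‖u q - x‖ := by
    intro q m
    have h := coord_le (u q - x) m
    rwa [show (u q - x) m = (u q) m - x m by rw [lp.coeFn_sub]; rfl] at h
  have hyq_eq : ∀ q n, yq q n = 2 * (u q) (Nat.pair 0 (Nat.pair n 0)) := by
    intro q n
    have h := hyqE q (Nat.pair 0 (Nat.pair n 0))
    rw [Sfun_spec, bb_zero] at h
    rw [h]; ring
  have happrox : ∀ ε > (0:ℝ), ∃ z : ℕ → ℝ, Pred z ∧ ∀ n, |z n - Y n| ≤ ε := by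
    intro ε hε
    obtain ⟨N, hN⟩ := Metric.tendsto_atTop.1 hux (ε/2) (by linarith)
    refine ⟨yq N, hyqP N, fun n => ?_⟩
    have h1 := hdist N (Nat.pair 0 (Nat.pair n 0))
    have h2 := hN N le_rfl
    rw [dist_eq_norm] at h2
    rw [hyq_eq, hY]
    have : |2 * (u N) (Nat.pair 0 (Nat.pair n 0)) - 2 * x (Nat.pair 0 (Nat.pair n 0))|
        = 2 * |(u N) (Nat.pair 0 (Nat.pair n 0)) - x (Nat.pair 0 (Nat.pair n 0))| := by
      rw [show (2:ℝ) * (u N) (Nat.pair 0 (Nat.pair n 0)) - 2 * x (Nat.pair 0 (Nat.pair n 0))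
          = 2 * ((u N) (Nat.pair 0 (Nat.pair n 0)) - x (Nat.pair 0 (Nat.pair n 0))) by ring,
        abs_mul, abs_two]
    rw [this]
    linarith
  refine ⟨Y, pred_of_approx happrox, fun m => ?_⟩
  -- coordinatewise limits
  have hcoord : ∀ k, Tendsto (fun q => (u q) k) atTop (𝓝 (x k)) := by
    intro k
    rw [tendsto_iff_norm_sub_tendsto_zero]
    apply squeeze_zero (g := fun q => ‖u q - x‖) (fun q => norm_nonneg _)
      (fun q => by rw [Real.norm_eq_abs]; exact hdist q k) ?_
    rw [← tendsto_iff_norm_sub_tendsto_zero]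
    exact hux
  have hYlim : Tendsto (fun q => yq q (em m).1) atTop (𝓝 (Y (em m).1)) := by
    have := (hcoord (Nat.pair 0 (Nat.pair (em m).1 0))).const_mul 2
    simp only [hyq_eq]
    exact this
  have h1 : Tendsto (fun q => (u q) m) atTop (𝓝 (Y (em m).1 * bb (em m).2)) := by
    have h2 := hYlim.mul_const (bb (em m).2)
    apply h2.congr
    intro q
    rw [hyqE q m]; rfl
  exact tendsto_nhds_unique (hcoord m) h1

/-- the generators as elements of ℓ∞. -/
def gel (s : ℝ) : Linf :=
  ⟨Sfun (ys s), memℓp_infty ⟨1, by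
    rintro v ⟨m, rfl⟩
    show ‖Sfun (ys s) m‖ ≤ 1
    rw [Real.norm_eq_abs, Sfun, abs_mul]
    have h1 : |ys s (em m).1| ≤ 1 := by
      rw [abs_le]; exact ⟨by linarith [ys_nonneg s (em m).1], ys_le_one s (em m).1⟩
    have h2 := bb_le_one (em m).2
    nlinarith [abs_nonneg (ys s (em m).1), abs_nonneg (bb (em m).2)]⟩⟩

lemma gel_apply (s : ℝ) (m : ℕ) : gel s m = Sfun (ys s) m := rfl

lemma gel_mem {s : ℝ} (hs : 1 ≤ s) : gel s ∈ MS := ⟨ys s, pred_ys hs, fun _ => rfl⟩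

lemma gel_dist {s t : ℝ} (hs : 1 ≤ s) (ht : 1 ≤ t) (hst : s ≠ t) :
    (2⁻¹ : ℝ) ≤ ‖gel s - gel t‖ := by
  obtain ⟨N, hN⟩ := (floor_ne hs (fun h => hst h.symm : t ≠ s)).exists
  set n₀ := idx s N with hn₀
  set m := Nat.pair 0 (Nat.pair n₀ 0) with hm
  have h1 : gel s m = ys s n₀ * bb 0 := by rw [gel_apply, hm, Sfun_spec]
  have h2 : gel t m = ys t n₀ * bb 0 := by rw [gel_apply, hm, Sfun_spec]
  have hys : ys s n₀ = 1 := if_pos ⟨N, rfl⟩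
  have hyt : ys t n₀ = 0 := by
    apply if_neg
    rintro ⟨j, hj⟩
    rw [hn₀] at hj
    obtain ⟨rfl, hfl⟩ := idx_eq_iff.1 hj
    exact hN hfl
  have hc := coord_le (gel s - gel t) m
  rw [show (gel s - gel t) m = gel s m - gel t m by rw [lp.coeFn_sub]; rfl] at hc
  rw [h1, h2, hys, hyt, bb_zero] at hc
  rw [show |1 * (2⁻¹:ℝ) - 0 * 2⁻¹| = 2⁻¹ by
    rw [one_mul, zero_mul, sub_zero, abs_of_pos] <;> norm_num] at hc
  exact hc

lemma not_sep : ¬ TopologicalSpace.IsSeparable (MS : Set Linf) := by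
  rintro ⟨c, hc, hsub⟩
  have hpick : ∀ s : Set.Ici (1:ℝ), ∃ b ∈ c, dist (gel s) b < 1/8 := by
    intro ⟨s, hs⟩
    have hmem : gel s ∈ closure c := hsub (gel_mem hs)
    exact Metric.mem_closure_iff.1 hmem (1/8) (by norm_num)
  choose f hfc hfd using hpick
  have hinj : Function.Injective f := by
    intro s t h
    by_contra hne
    have hst : (s:ℝ) ≠ (t:ℝ) := fun hval => hne (Subtype.ext hval)
    have hd := gel_dist s.2 t.2 hst
    have h1 := hfd s
    have h2 := hfd t
    rw [h] at h1
    have h3 : dist (gel s) (gel t) ≤ dist (gel s) (f t) + dist (gel t) (f t) :=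
      dist_triangle_right _ _ _
    rw [dist_eq_norm] at h3
    have : ‖gel (s:ℝ) - gel (t:ℝ)‖ < 1/4 := by linarith
    rw [show ((2:ℝ)⁻¹) = 1/2 by norm_num] at hd
    linarith
  have hcount : Countable (Set.Ici (1:ℝ)) := by
    haveI := hc.to_subtype
    let f' : Set.Ici (1:ℝ) → c := fun s => ⟨f s, hfc s⟩
    have hinj' : Function.Injective f' := fun a b h => hinj (congrArg Subtype.val h)
    exact hinj'.countable
  -- Ici 1 is uncountable
  have hIci : ¬ (Set.Ici (1:ℝ)).Countable := by
    intro hcnt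
    have hrange : Set.range (fun x : ℝ => 1 + Real.exp x) ⊆ Set.Ici 1 := by
      rintro v ⟨w, rfl⟩
      simp only [Set.mem_Ici]
      have := Real.exp_pos w
      linarith
    have hrc : (Set.range fun x : ℝ => 1 + Real.exp x).Countable := hcnt.mono hrange
    have hinj2 : Function.Injective fun x : ℝ => 1 + Real.exp x := by
      intro a b h
      simp only at h
      exact Real.exp_injective (by linarith)
    have huniv : (Set.univ : Set ℝ).Countable := by
      have : (fun x : ℝ => 1 + Real.exp x) ⁻¹'
          (Set.range fun x : ℝ => 1 + Real.exp x) = Set.univ := by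
        apply Set.eq_univ_of_forall
        intro v; exact ⟨v, rfl⟩
      rw [← this]
      exact hrc.preimage hinj2
    exact Cardinal.not_countable_real huniv
  exact hIci (Set.countable_coe_iff.1 hcount)

end ANS

theorem exists_closed_nonseparable_subspace :
    ∃ M : Submodule ℝ Linf, IsClosed (M : Set Linf) ∧
      ¬ TopologicalSpace.IsSeparable (M : Set Linf) ∧
      ∀ x ∈ M, x ≠ 0 → (accPtsL x).Countable ∧ (accPtsL x).Infinite := by
  refine ⟨ANS.MS, ANS.isClosed_MS, ANS.not_sep, ?_⟩
  rintro x ⟨y, hyP, hyE⟩ hxne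
  have hyb : ∀ n, |y n| ≤ 2 * ‖x‖ := by
    intro n
    have h := hyE (Nat.pair 0 (Nat.pair n 0))
    rw [ANS.Sfun_spec, ANS.bb_zero] at h
    have h2 := ANS.coord_le x (Nat.pair 0 (Nat.pair n 0))
    rw [h, abs_mul, show |(2⁻¹:ℝ)| = 2⁻¹ by norm_num] at h2
    linarith
  constructor
  · have hsub1 : accPtsL x ⊆ closure (Set.range fun m => x m) :=
      ANS.accPts_subset_closure _
    have hS1c : IsCompact (closure (Set.range y)) := by
      apply Metric.isCompact_of_isClosed_isBounded isClosed_closure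
      apply Bornology.IsBounded.closure
      apply (Metric.isBounded_closedBall (x := (0:ℝ)) (r := 2*‖x‖)).subset
      rintro v ⟨n, rfl⟩
      rw [Metric.mem_closedBall, Real.dist_eq, sub_zero]
      exact hyb n
    have hS2c : IsCompact (insert (1:ℝ) (Set.range ANS.bb)) :=
      ANS.bb_tendsto.isCompact_insert_range
    have hsub2 : closure (Set.range fun m => x m) ⊆
        closure (Set.range y) * insert (1:ℝ) (Set.range ANS.bb) := by
      apply closure_minimal ?_ (hS1c.mul hS2c).isClosed
      rintro v ⟨m, rfl⟩
      show (x : ℕ → ℝ) m ∈ _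
      rw [hyE m]
      exact Set.mul_mem_mul (subset_closure ⟨(ANS.em m).1, rfl⟩)
        (Set.mem_insert_of_mem _ ⟨(ANS.em m).2, rfl⟩)
    have hcnt : (closure (Set.range y) * insert (1:ℝ) (Set.range ANS.bb)).Countable := by
      rw [← Set.image2_mul]
      exact Set.Countable.image2
        (ANS.closure_range_countable (ANS.accPts_countable_of_pred hyP))
        ((Set.countable_range ANS.bb).insert 1) _
    exact Set.Countable.mono (hsub1.trans hsub2) hcnt
  · have hy0 : ∃ n, y n ≠ 0 := by
      by_contra hcon
      push_neg at hcon
      apply hxne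
      apply lp.ext
      rw [lp.coeFn_zero]
      funext m
      rw [hyE m]
      simp [ANS.Sfun, hcon]
    obtain ⟨n₀, hn₀⟩ := hy0
    apply Set.infinite_of_injective_forall_mem
      (f := fun k : ℕ => y n₀ * ANS.bb k)
    · intro k l h
      exact ANS.bb_strictMono.injective (mul_left_cancel₀ hn₀ h)
    · intro k
      refine ⟨fun q => Nat.pair q (Nat.pair n₀ k),
        fun a b h => Nat.pair_lt_pair_left _ h, ?_⟩
      have he : (fun q => x (Nat.pair q (Nat.pair n₀ k))) = fun _ => y n₀ * ANS.bb k := by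
        funext q
        rw [hyE, ANS.Sfun_spec]
      rw [he]
      exact tendsto_const_nhds
end
end
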